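/- arXiv:1206.1396 — 7 statements merged into one kernel-verified Lean document; each statement's English description precedes it below -/
import Mathlib

section
/- (Discrete Ásgeirsson mean value theorem.) Let U : T_q × T_q → ℂ satisfy (L applied in the first variable) U(x,y) = (L applied in the second variable) U(x,y) for all vertices x, y ∈ T_q. Then for all x, y ∈ T_q and all m, n ∈ ℕ: Σ_{x' ∈ S(x,m)} Σ_{y' ∈ S(y,n)} U(x',y') = Σ_{x' ∈ S(x,n)} Σ_{y' ∈ S(y,m)} U(x',y'). -/
open scoped BigOperators

/-- A homogeneous tree of degree `q + 1`: a connected acyclic simple graph in which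
every vertex has exactly `q + 1` neighbours. Spheres for the graph distance are finite. -/
structure HomTree (q : ℕ) where
  V : Type
  G : SimpleGraph V
  conn : G.Connected
  acyclic : G.IsAcyclic
  sphereFin : ∀ (x : V) (n : ℕ), {y : V | G.dist x y = n}.Finite
  nbrFin : ∀ x : V, {y : V | G.Adj x y}.Finite
  degree : ∀ x : V, (nbrFin x).toFinset.card = q + 1

namespace HomTree

variable {q : ℕ}

/-- The sphere `S(x,n)` as a finite set. -/
noncomputable def sphere (T : HomTree q) (x : T.V) (n : ℕ) : Finset T.V :=
  (T.sphereFin x n).toFinset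

/-- The volume `δ(n)` of spheres. -/
def delta (q n : ℕ) : ℕ := if n = 0 then 1 else (q + 1) * q ^ (n - 1)

/-- The combinatorial Laplacian on the tree. -/
noncomputable def lap (T : HomTree q) (f : T.V → ℂ) (x : T.V) : ℂ :=
  f x - (1 / ((q : ℂ) + 1)) * ∑ y ∈ T.sphere x 1, f y

/-- Spherical means. -/
noncomputable def sphMean (T : HomTree q) (f : T.V → ℂ) (x : T.V) (n : ℕ) : ℂ :=
  (1 / (delta q n : ℂ)) * ∑ y ∈ T.sphere x n, f y

/-- Real powers of `q`, as a complex number. -/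
noncomputable def qpow (q : ℕ) (x : ℝ) : ℂ := (((q : ℝ) ^ x : ℝ) : ℂ)

/-- `γ = 2 / (q^{1/2} + q^{-1/2})`. -/
noncomputable def gam (q : ℕ) : ℝ := 2 / ((q : ℝ) ^ ((1 : ℝ)/2) + (q : ℝ) ^ (-(1 : ℝ)/2))

/-- The combinatorial Laplacian on `ℤ`. -/
noncomputable def lapZ (φ : ℤ → ℂ) (m : ℤ) : ℂ := φ m - (φ (m + 1) + φ (m - 1)) / 2

lemma ball_finite (T : HomTree q) (x : T.V) (n : ℕ) :
    {y : T.V | T.G.dist x y ≤ n}.Finite := by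
  have h : {y : T.V | T.G.dist x y ≤ n} ⊆ ⋃ m ∈ Set.Iic n, {y : T.V | T.G.dist x y = m} := by
    intro y hy
    exact Set.mem_biUnion hy rfl
  exact (((Set.finite_Iic n)).biUnion fun m _ => T.sphereFin x m).subset h

/-- The ball `B(x,n)` as a finite set. -/
noncomputable def ball (T : HomTree q) (x : T.V) (n : ℕ) : Finset T.V :=
  (T.ball_finite x n).toFinset

/-- The operator `M_n` (with `M_n = 0` for `n < 0`). -/
noncomputable def Mop (T : HomTree q) (n : ℤ) (f : T.V → ℂ) (x : T.V) : ℂ :=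
  if 0 ≤ n then
    qpow q (-(n : ℝ) / 2) *
      ∑ y ∈ (T.ball x n.toNat).filter (fun y => (n.toNat - T.G.dist x y) % 2 = 0), f y
  else 0

/-- The operator `C_n = (M_{|n|} - M_{|n|-2})/2`, `C_0 = Id`. -/
noncomputable def Cop (T : HomTree q) (n : ℤ) (f : T.V → ℂ) (x : T.V) : ℂ :=
  if n = 0 then f x else (Mop T |n| f x - Mop T (|n| - 2) f x) / 2

/-- The operator `S_n = sign(n) · M_{|n|-1}`. -/
noncomputable def Sop (T : HomTree q) (n : ℤ) (g : T.V → ℂ) (x : T.V) : ℂ :=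
  (n.sign : ℂ) * Mop T (|n| - 1) g x

/-- `u` solves the shifted wave equation on the tree. -/
def IsWaveSol (T : HomTree q) (u : T.V → ℤ → ℂ) : Prop :=
  ∀ (x : T.V) (n : ℤ),
    u x (n + 1) + u x (n - 1) = qpow q (-(1 : ℝ)/2) * ∑ y ∈ T.sphere x 1, u y n

/-- `u` solves the Cauchy problem for the shifted wave equation with data `f`, `g`. -/
def IsCauchy (T : HomTree q) (f g : T.V → ℂ) (u : T.V → ℤ → ℂ) : Prop :=
  IsWaveSol T u ∧ (∀ x, u x 0 = f x) ∧ ∀ x, (u x 1 - u x (-1)) / 2 = g x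

/-- Kinetic energy. -/
noncomputable def kinetic (T : HomTree q) (u : T.V → ℤ → ℂ) (n : ℤ) : ℝ :=
  (1/2) * ∑' x : T.V, ‖(u x (n + 1) - u x (n - 1)) / 2‖ ^ 2

/-- Potential energy. -/
noncomputable def potential (T : HomTree q) (u : T.V → ℤ → ℂ) (n : ℤ) : ℝ :=
  (1 / (4 * (q : ℝ))) * ∑' p : T.V × T.V,
      (if T.G.dist p.1 p.2 = 2 then ‖(u p.1 n - u p.2 n) / 2‖ ^ 2 else 0)
    - (((q : ℝ) - 1) ^ 2 / (8 * (q : ℝ))) * ∑' x : T.V, ‖u x n‖ ^ 2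

/-- The two-step Laplacian. -/
noncomputable def lap2 (T : HomTree q) (f : T.V → ℂ) (x : T.V) : ℂ :=
  f x - (1 / ((q : ℂ) * ((q : ℂ) + 1))) * ∑ y ∈ T.sphere x 2, f y

end HomTree
section AsgAux

open scoped Classical

namespace HomTree

variable {q : ℕ} (T : HomTree q)

lemma mem_sphere' {x y : T.V} {n : ℕ} : y ∈ T.sphere x n ↔ T.G.dist x y = n := by
  simp [sphere]

lemma mem_ball' {x y : T.V} {n : ℕ} : y ∈ T.ball x n ↔ T.G.dist x y ≤ n := by
  simp [ball]

lemma sphere_zero' (x : T.V) : T.sphere x 0 = {x} := by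
  ext y
  simp [mem_sphere', T.conn.dist_eq_zero_iff, eq_comm]

lemma path_length_eq_dist {x y : T.V} (p : T.G.Walk x y) (hp : p.IsPath) :
    p.length = T.G.dist x y := by
  obtain ⟨p₀, hp₀, hl⟩ := T.conn.exists_path_of_dist x y
  have h := T.acyclic.path_unique ⟨p, hp⟩ ⟨p₀, hp₀⟩
  rw [Subtype.ext_iff] at h
  simp only at h
  rw [h, hl]

lemma isPath_concat {x u v : T.V} {p : T.G.Walk x u} (hp : p.IsPath) (h : T.G.Adj u v)
    (hv : v ∉ p.support) : (p.concat h).IsPath := by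
  rw [← SimpleGraph.Walk.isPath_reverse_iff, SimpleGraph.Walk.reverse_concat]
  exact hp.reverse.cons (by simpa [SimpleGraph.Walk.support_reverse] using hv)

lemma dist_adj_step (x : T.V) {u v : T.V} (h : T.G.Adj u v) :
    T.G.dist x v = T.G.dist x u + 1 ∨ T.G.dist x u = T.G.dist x v + 1 := by
  obtain ⟨p, hp, hl⟩ := T.conn.exists_path_of_dist x u
  by_cases hv : v ∈ p.support
  · right
    have h1 : (p.takeUntil v hv).IsPath := hp.takeUntil hv
    have h2 : (p.dropUntil v hv).IsPath := hp.dropUntil hv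
    have hsingle : (SimpleGraph.Walk.cons h.symm .nil : T.G.Walk v u).IsPath := by
      simp [SimpleGraph.Walk.cons_isPath_iff, h.ne']
    have h3 : p.dropUntil v hv = SimpleGraph.Walk.cons h.symm .nil := by
      have := T.acyclic.path_unique ⟨p.dropUntil v hv, h2⟩ ⟨_, hsingle⟩
      rw [Subtype.ext_iff] at this
      exact this
    have h4 : (p.takeUntil v hv).length + 1 = p.length := by
      conv_rhs => rw [← p.take_spec hv]
      rw [SimpleGraph.Walk.length_append, h3]
      simp
    have h5 := path_length_eq_dist T _ h1
    omega
  · left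
    have hc : (p.concat h).IsPath := isPath_concat T hp h hv
    have h6 := path_length_eq_dist T _ hc
    rw [SimpleGraph.Walk.length_concat] at h6
    omega

lemma parent_unique (x u : T.V) (m : ℕ) (h : T.G.dist x u = m + 1) :
    ∃! v, T.G.Adj u v ∧ T.G.dist x v = m := by
  obtain ⟨p, hp, hl⟩ := T.conn.exists_path_of_dist x u
  rw [h] at hl
  have hxu : u ≠ x := by
    intro e
    subst e
    rw [SimpleGraph.dist_self] at h
    omega
  obtain ⟨w, hw, t, ht⟩ := SimpleGraph.Walk.exists_eq_cons_of_ne hxu p.reverse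
  have hpt : p = t.reverse.concat hw.symm := by
    have := congrArg SimpleGraph.Walk.reverse ht
    rw [SimpleGraph.Walk.reverse_reverse, SimpleGraph.Walk.reverse_cons] at this
    simpa [SimpleGraph.Walk.concat] using this
  have htp : t.reverse.IsPath := by
    have : (SimpleGraph.Walk.cons hw t).IsPath := by rw [← ht]; exact hp.reverse
    exact ((SimpleGraph.Walk.cons_isPath_iff _ _).mp this).1.reverse
  have hlt : t.reverse.length = m := by
    have := congrArg SimpleGraph.Walk.length ht
    rw [SimpleGraph.Walk.length_reverse, hl] at this
    simp only [SimpleGraph.Walk.length_cons] at this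
    rw [SimpleGraph.Walk.length_reverse]
    omega
  have hdw : T.G.dist x w = m := by rw [← path_length_eq_dist T _ htp]; exact hlt
  refine ⟨w, ⟨hw, hdw⟩, ?_⟩
  rintro v ⟨hv, hdv⟩
  obtain ⟨r, hr, hlr⟩ := T.conn.exists_path_of_dist x v
  have hus : u ∉ r.support := by
    intro hus
    have h1 := SimpleGraph.Walk.length_takeUntil_le r hus
    have h2 := SimpleGraph.dist_le (r.takeUntil u hus)
    omega
  have hcp : (r.concat hv.symm).IsPath := isPath_concat T hr hv.symm hus
  have heq : r.concat hv.symm = p :=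
    Subtype.ext_iff.mp (T.acyclic.path_unique ⟨_, hcp⟩ ⟨p, hp⟩)
  rw [hpt] at heq
  obtain ⟨hveq, -⟩ := SimpleGraph.Walk.concat_inj heq
  exact hveq

lemma card_parents (x u : T.V) (m : ℕ) (h : T.G.dist x u = m + 1) :
    (((T.nbrFin u).toFinset).filter (fun v => T.G.dist x v = m)).card = 1 := by
  obtain ⟨w, ⟨hw1, hw2⟩, hwu⟩ := parent_unique T x u m h
  rw [Finset.card_eq_one]
  refine ⟨w, ?_⟩
  ext v
  simp only [Finset.mem_filter, Set.Finite.mem_toFinset, Set.mem_setOf_eq,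
    Finset.mem_singleton]
  constructor
  · rintro ⟨a, b⟩; exact hwu v ⟨a, b⟩
  · rintro rfl; exact ⟨hw1, hw2⟩

lemma card_children (x u : T.V) (k : ℕ) (h : T.G.dist x u = k) :
    (((T.nbrFin u).toFinset).filter (fun v => T.G.dist x v = k + 1)).card
      = if k = 0 then q + 1 else q := by
  rcases k with _ | j
  · have hux : x = u := (T.conn.dist_eq_zero_iff).mp h
    rw [if_pos rfl]
    have heq : ((T.nbrFin u).toFinset).filter (fun v => T.G.dist x v = 1)
        = (T.nbrFin u).toFinset := by
      apply Finset.filter_true_of_mem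
      intro v hv
      rw [Set.Finite.mem_toFinset, Set.mem_setOf_eq] at hv
      rw [SimpleGraph.dist_eq_one_iff_adj]
      exact hux ▸ hv
    rw [heq, T.degree]
  · rw [if_neg (by omega)]
    have hpar := card_parents T x u j h
    have hneg : ((T.nbrFin u).toFinset).filter (fun v => ¬ T.G.dist x v = j + 1 + 1)
        = ((T.nbrFin u).toFinset).filter (fun v => T.G.dist x v = j) := by
      apply Finset.filter_congr
      intro v hv
      rw [Set.Finite.mem_toFinset, Set.mem_setOf_eq] at hv
      have hstep := dist_adj_step T x hv
      constructor
      · intro hne; rcases hstep with h' | h' <;> omega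
      · intro hj; rcases hstep with h' | h' <;> omega
    have htot := Finset.card_filter_add_card_filter_not
      (s := (T.nbrFin u).toFinset) (p := fun v => T.G.dist x v = j + 1 + 1)
    rw [hneg, hpar, T.degree] at htot
    omega

/-- Coefficient in the sphere-sum recursion. -/
noncomputable def coeff (q m : ℕ) : ℂ := if m = 0 then 0 else if m = 1 then (q : ℂ) + 1 else q

lemma key_sum (f : T.V → ℂ) (x : T.V) (m : ℕ) :
    ∑ u ∈ T.sphere x m, ∑ v ∈ T.sphere u 1, f v
      = (∑ v ∈ T.sphere x (m+1), f v) + coeff q m * ∑ v ∈ T.sphere x (m-1), f v := by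
  rcases m with _ | j
  · rw [sphere_zero']
    simp [coeff]
  · set B := T.ball x (j + 2) with hB
    have hfilter : ∀ k : ℕ, k ≤ j + 2 → B.filter (fun v => T.G.dist x v = k) = T.sphere x k := by
      intro k hk
      ext v
      simp only [Finset.mem_filter, hB, mem_ball', mem_sphere']
      constructor
      · rintro ⟨-, hv⟩; exact hv
      · intro hv; exact ⟨by omega, hv⟩
    calc ∑ u ∈ T.sphere x (j+1), ∑ v ∈ T.sphere u 1, f v
        = ∑ u ∈ T.sphere x (j+1), ∑ v ∈ B, if T.G.dist u v = 1 then f v else 0 := by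
          refine Finset.sum_congr rfl fun u hu => ?_
          rw [mem_sphere'] at hu
          have hsub : T.sphere u 1 = B.filter (fun v => T.G.dist u v = 1) := by
            ext v
            simp only [mem_sphere', Finset.mem_filter, hB, mem_ball']
            constructor
            · intro hv
              refine ⟨?_, hv⟩
              have := T.conn.dist_triangle (u := x) (v := u) (w := v)
              omega
            · rintro ⟨-, hv⟩; exact hv
          rw [hsub, Finset.sum_filter]
      _ = ∑ v ∈ B, ∑ u ∈ T.sphere x (j+1), if T.G.dist u v = 1 then f v else 0 :=
          Finset.sum_comm
      _ = ∑ v ∈ B, (((T.sphere x (j+1)).filter (fun u => T.G.dist u v = 1)).card : ℂ) * f v := by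
          refine Finset.sum_congr rfl fun v hv => ?_
          rw [← Finset.sum_filter, Finset.sum_const, nsmul_eq_mul]
      _ = ∑ v ∈ B, ((if T.G.dist x v = j + 2 then f v else 0)
            + coeff q (j+1) * (if T.G.dist x v = j then f v else 0)) := by
          refine Finset.sum_congr rfl fun v hv => ?_
          have hfe : (T.sphere x (j+1)).filter (fun u => T.G.dist u v = 1)
              = ((T.nbrFin v).toFinset).filter (fun u => T.G.dist x u = j + 1) := by
            ext u
            simp only [Finset.mem_filter, mem_sphere', Set.Finite.mem_toFinset,
              Set.mem_setOf_eq]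
            rw [SimpleGraph.dist_comm (u := u), SimpleGraph.dist_eq_one_iff_adj]
            exact ⟨fun ⟨a, b⟩ => ⟨b, a⟩, fun ⟨a, b⟩ => ⟨b, a⟩⟩
          rw [hfe]
          by_cases h1 : T.G.dist x v = j + 2
          · rw [card_parents T x v (j+1) h1, if_pos h1, if_neg (by omega)]
            simp
          · by_cases h2 : T.G.dist x v = j
            · rw [card_children T x v j h2, if_neg h1, if_pos h2]
              have : coeff q (j+1) = ((if j = 0 then q + 1 else q : ℕ) : ℂ) := by
                rcases j with _ | i <;> simp [coeff]
              rw [this]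
              ring
            · have hempty : ((T.nbrFin v).toFinset).filter
                  (fun u => T.G.dist x u = j + 1) = ∅ := by
                rw [Finset.filter_eq_empty_iff]
                intro u hu
                rw [Set.Finite.mem_toFinset, Set.mem_setOf_eq] at hu
                have hstep := dist_adj_step T x hu
                intro hcon
                rcases hstep with h' | h' <;> omega
              rw [hempty, if_neg h1, if_neg h2]
              simp
      _ = (∑ v ∈ T.sphere x (j+2), f v) + coeff q (j+1) * ∑ v ∈ T.sphere x j, f v := by
          rw [Finset.sum_add_distrib, ← Finset.mul_sum]
          congr 1
          · rw [← hfilter (j+2) (by omega), Finset.sum_filter]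
          · rw [← hfilter j (by omega), Finset.sum_filter]

lemma symm_of_rel (c : ℕ → ℂ) (F : ℕ → ℕ → ℂ)
    (hrel : ∀ a b : ℕ, F (a+1) b + c a * F (a-1) b = F a (b+1) + c b * F a (b-1))
    (m n : ℕ) : F m n = F n m := by
  have key : ∀ k m n : ℕ, n ≤ m → 3 * m + n = k → F m n = F n m := by
    intro k
    induction k using Nat.strong_induction_on with
    | _ k IH =>
      intro m n hnm hk
      have IH' : ∀ a b : ℕ, 3 * a + b < k → 3 * b + a < k → F a b = F b a := by
        intro a b h1 h2
        rcases le_total b a with h | h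
        · exact IH (3 * a + b) h1 a b h rfl
        · exact (IH (3 * b + a) h2 b a h rfl).symm
      subst hk
      rcases Nat.eq_or_lt_of_le hnm with rfl | hlt
      · rfl
      · obtain ⟨a, rfl⟩ : ∃ a, m = a + 1 := ⟨m - 1, by omega⟩
        have hna : n ≤ a := by omega
        have h1 := hrel a n
        have h2 := hrel n a
        rcases Nat.eq_or_lt_of_le hna with rfl | hna'
        · have e1 : F n (n-1) = F (n-1) n := IH' n (n-1) (by omega) (by omega)
          linear_combination h1 + c n * e1
        · have e1 : F a (n+1) = F (n+1) a := IH' a (n+1) (by omega) (by omega)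
          have e2 : F a (n-1) = F (n-1) a := IH' a (n-1) (by omega) (by omega)
          have e3 : F (a-1) n = F n (a-1) := IH' (a-1) n (by omega) (by omega)
          linear_combination h1 + h2 + e1 + c n * e2 - c a * e3
  rcases le_total n m with h | h
  · exact key (3 * m + n) m n h rfl
  · exact (key (3 * n + m) n m h rfl).symm

end HomTree

end AsgAux

open HomTree in
/-- discrete Ásgeirsson mean value theorem. -/
theorem stmt2 {q : ℕ} (hq : 2 ≤ q) (T : HomTree q) (U : T.V → T.V → ℂ)
    (hU : ∀ x y : T.V, T.lap (fun x' => U x' y) x = T.lap (fun y' => U x y') y) :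
    ∀ (x y : T.V) (m n : ℕ),
      ∑ x' ∈ T.sphere x m, ∑ y' ∈ T.sphere y n, U x' y' =
      ∑ x' ∈ T.sphere x n, ∑ y' ∈ T.sphere y m, U x' y' := by
  intro x y m n
  have hU' : ∀ x' y' : T.V,
      ∑ v ∈ T.sphere x' 1, U v y' = ∑ w ∈ T.sphere y' 1, U x' w := by
    intro x' y'
    have h := hU x' y'
    simp only [HomTree.lap] at h
    have h2 : (1 / ((q : ℂ) + 1)) * ∑ v ∈ T.sphere x' 1, U v y'
        = (1 / ((q : ℂ) + 1)) * ∑ w ∈ T.sphere y' 1, U x' w := by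
      have := sub_right_inj.mp h
      exact this
    have hne : (1 / ((q : ℂ) + 1)) ≠ 0 :=
      one_div_ne_zero (Nat.cast_add_one_ne_zero q)
    exact mul_left_cancel₀ hne h2
  set F : ℕ → ℕ → ℂ := fun a b => ∑ x' ∈ T.sphere x a, ∑ y' ∈ T.sphere y b, U x' y' with hF
  have hrel : ∀ a b : ℕ,
      F (a+1) b + coeff q a * F (a-1) b = F a (b+1) + coeff q b * F a (b-1) := by
    intro a b
    have L : ∑ x' ∈ T.sphere x a, ∑ y' ∈ T.sphere y b, (∑ v ∈ T.sphere x' 1, U v y')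
        = F (a+1) b + coeff q a * F (a-1) b := by
      rw [Finset.sum_comm]
      rw [Finset.sum_congr rfl (fun y' _ => key_sum T (fun v => U v y') x a)]
      rw [Finset.sum_add_distrib, ← Finset.mul_sum]
      congr 1
      · exact Finset.sum_comm
      · congr 1
        exact Finset.sum_comm
    have R : ∑ x' ∈ T.sphere x a, ∑ y' ∈ T.sphere y b, (∑ w ∈ T.sphere y' 1, U x' w)
        = F a (b+1) + coeff q b * F a (b-1) := by
      rw [Finset.sum_congr rfl (fun x' _ => key_sum T (U x') y b)]
      rw [Finset.sum_add_distrib, ← Finset.mul_sum]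
    rw [← L, ← R]
    exact Finset.sum_congr rfl fun x' _ => Finset.sum_congr rfl fun y' _ => hU' x' y'
  exact symm_of_rel (coeff q) F hrel m n
end

section
/- Let U : T_q × T_q → ℂ satisfy (L applied in the first variable) U(x,y) = (L applied in the second variable) U(x,y) for all vertices x, y ∈ T_q. Then for all x, y ∈ T_q and all n ∈ ℕ: Σ_{x' ∈ S(x,n)} U(x',y) = Σ_{y' ∈ S(y,n)} U(x,y'). -/
open scoped BigOperators

-- AUX START
namespace AsgAux

open SimpleGraph Finset HomTree

variable {q : ℕ} (T : HomTree q)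

noncomputable local instance : DecidableEq T.V := Classical.decEq _

noncomputable local instance (z w : T.V) : Decidable (T.G.Adj z w) := Classical.dec _

lemma mem_sphere {x y : T.V} {n : ℕ} : y ∈ T.sphere x n ↔ T.G.dist x y = n := by
  simp [HomTree.sphere, Set.Finite.mem_toFinset]

lemma sphere_zero (x : T.V) : T.sphere x 0 = {x} := by
  ext y
  rw [mem_sphere, Finset.mem_singleton, T.conn.dist_eq_zero_iff]
  exact eq_comm

lemma mem_sphere_one {x y : T.V} : y ∈ T.sphere x 1 ↔ T.G.Adj x y := by
  rw [mem_sphere, SimpleGraph.dist_eq_one_iff_adj]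

/-- A shortest path. -/
lemma exists_shortest_path (x w : T.V) :
    ∃ p : T.G.Walk x w, p.IsPath ∧ p.length = T.G.dist x w := by
  obtain ⟨p, hp⟩ := (T.conn x w).exists_walk_length_eq_dist
  refine ⟨p.bypass, p.bypass_isPath, le_antisymm ?_ (SimpleGraph.dist_le _)⟩
  calc p.bypass.length ≤ p.length := SimpleGraph.Walk.length_bypass_le p
    _ = T.G.dist x w := hp

lemma dist_le_of_mem_support {x w v : T.V} (p : T.G.Walk x w) (hv : v ∈ p.support) :
    T.G.dist x v ≤ p.length :=
  le_trans (SimpleGraph.dist_le (p.takeUntil v hv)) (SimpleGraph.Walk.length_takeUntil_le p hv)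

/-- adjacent vertices are at different distances from any vertex. -/
lemma adj_dist_ne (x : T.V) {z w : T.V} (h : T.G.Adj z w) :
    T.G.dist x z ≠ T.G.dist x w := by
  intro heq
  obtain ⟨P, hP, hPl⟩ := exists_shortest_path T x z
  by_cases hw : w ∈ P.support
  · -- then takeUntil has length = dist x z, so dropUntil has length 0, so w = z
    have h1 : T.G.dist x w ≤ (P.takeUntil w hw).length := SimpleGraph.dist_le _
    have h2 : (P.takeUntil w hw).length ≤ P.length := SimpleGraph.Walk.length_takeUntil_le P hw
    have h3 : (P.takeUntil w hw).length + (P.dropUntil w hw).length = P.length := by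
      have := congrArg SimpleGraph.Walk.length (P.take_spec hw)
      rwa [SimpleGraph.Walk.length_append] at this
    have h4 : (P.dropUntil w hw).length = 0 := by omega
    exact h.ne' (SimpleGraph.Walk.eq_of_length_eq_zero h4)
  · -- concat gives a second path from x to w of a different length
    have hP' : (P.concat h).IsPath := by
      rw [← SimpleGraph.Walk.isPath_reverse_iff, SimpleGraph.Walk.reverse_concat]
      exact hP.reverse.cons (by simpa [SimpleGraph.Walk.support_reverse] using hw)
    obtain ⟨Q, hQ, hQl⟩ := exists_shortest_path T x w
    have huniq := SimpleGraph.isAcyclic_iff_path_unique.mp T.acyclic ⟨P.concat h, hP'⟩ ⟨Q, hQ⟩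
    have hl : (P.concat h).length = Q.length :=
      congrArg (fun p : T.G.Path x w => p.1.length) huniq
    rw [SimpleGraph.Walk.length_concat, hPl, hQl, heq] at hl
    omega

lemma adj_dist_cases (x : T.V) {z w : T.V} (h : T.G.Adj z w) :
    T.G.dist x w = T.G.dist x z + 1 ∨ T.G.dist x z = T.G.dist x w + 1 := by
  have h1 : T.G.dist x w ≤ T.G.dist x z + 1 := by
    calc T.G.dist x w ≤ T.G.dist x z + T.G.dist z w := T.conn.dist_triangle
      _ = T.G.dist x z + 1 := by rw [SimpleGraph.dist_eq_one_iff_adj.mpr h]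
  have h2 : T.G.dist x z ≤ T.G.dist x w + 1 := by
    calc T.G.dist x z ≤ T.G.dist x w + T.G.dist w z := T.conn.dist_triangle
      _ = T.G.dist x w + 1 := by rw [SimpleGraph.dist_eq_one_iff_adj.mpr h.symm]
  have h3 := adj_dist_ne T x h
  omega

lemma exists_parent {x w : T.V} {n : ℕ} (hd : T.G.dist x w = n + 1) :
    ∃ z, T.G.Adj w z ∧ T.G.dist x z = n := by
  obtain ⟨p, _, hpl⟩ := exists_shortest_path T x w
  have hnn : ¬ p.reverse.Nil := by
    rw [SimpleGraph.Walk.not_nil_iff_lt_length, SimpleGraph.Walk.length_reverse, hpl]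
    omega
  obtain ⟨z, hadj, r, hr⟩ := SimpleGraph.Walk.not_nil_iff.mp hnn
  have hrl : r.length = n := by
    have : p.reverse.length = n + 1 := by rw [SimpleGraph.Walk.length_reverse, hpl, hd]
    rw [hr] at this
    simpa using this
  refine ⟨z, hadj, le_antisymm ?_ ?_⟩
  · calc T.G.dist x z ≤ r.reverse.length := SimpleGraph.dist_le _
      _ = n := by rw [SimpleGraph.Walk.length_reverse, hrl]
  · have := adj_dist_cases T x hadj.symm
    omega

lemma parent_unique {x w : T.V} {n : ℕ} (hd : T.G.dist x w = n + 1) {z₁ z₂ : T.V}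
    (h1 : T.G.Adj w z₁) (hd1 : T.G.dist x z₁ = n) (h2 : T.G.Adj w z₂)
    (hd2 : T.G.dist x z₂ = n) : z₁ = z₂ := by
  obtain ⟨P₁, hP₁, hP₁l⟩ := exists_shortest_path T x z₁
  obtain ⟨P₂, hP₂, hP₂l⟩ := exists_shortest_path T x z₂
  have hw1 : w ∉ P₁.support := by
    intro hw
    have := dist_le_of_mem_support T P₁ hw
    rw [hP₁l, hd1] at this; omega
  have hw2 : w ∉ P₂.support := by
    intro hw
    have := dist_le_of_mem_support T P₂ hw
    rw [hP₂l, hd2] at this; omega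
  have hP₁' : (P₁.concat h1.symm).IsPath := by
    rw [← SimpleGraph.Walk.isPath_reverse_iff, SimpleGraph.Walk.reverse_concat]
    exact hP₁.reverse.cons (by simpa [SimpleGraph.Walk.support_reverse] using hw1)
  have hP₂' : (P₂.concat h2.symm).IsPath := by
    rw [← SimpleGraph.Walk.isPath_reverse_iff, SimpleGraph.Walk.reverse_concat]
    exact hP₂.reverse.cons (by simpa [SimpleGraph.Walk.support_reverse] using hw2)
  have heq : P₁.concat h1.symm = P₂.concat h2.symm := by
    have := SimpleGraph.isAcyclic_iff_path_unique.mp T.acyclic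
      ⟨P₁.concat h1.symm, hP₁'⟩ ⟨P₂.concat h2.symm, hP₂'⟩
    exact congrArg Subtype.val this
  have := congrArg (fun p => p.reverse.getVert 1) heq
  simpa [SimpleGraph.Walk.reverse_concat, SimpleGraph.Walk.getVert_cons_succ] using this


lemma card_parent {x w : T.V} {n : ℕ} (hd : T.G.dist x w = n + 1) :
    ((T.sphere x n).filter (fun z => T.G.Adj z w)).card = 1 := by
  rw [Finset.card_eq_one]
  obtain ⟨z, hz, hzd⟩ := exists_parent T hd
  refine ⟨z, ?_⟩
  ext z'
  simp only [Finset.mem_filter, mem_sphere, Finset.mem_singleton]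
  constructor
  · rintro ⟨hz'd, hz'⟩
    exact parent_unique T hd hz'.symm hz'd hz hzd
  · rintro rfl
    exact ⟨hzd, hz.symm⟩

lemma card_children {x w : T.V} {m : ℕ} (hd : T.G.dist x w = m) :
    ((T.sphere x (m + 1)).filter (fun z => T.G.Adj z w)).card
      = if m = 0 then q + 1 else q := by
  have hsame : ∀ n : ℕ, (T.sphere x n).filter (fun z => T.G.Adj z w)
      = (T.nbrFin w).toFinset.filter (fun z => T.G.dist x z = n) := by
    intro n
    ext z
    simp only [Finset.mem_filter, mem_sphere, Set.Finite.mem_toFinset, Set.mem_setOf_eq]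
    rw [SimpleGraph.adj_comm]
    exact and_comm
  have hdeg := T.degree w
  have hsplit := Finset.card_filter_add_card_filter_not
    (s := (T.nbrFin w).toFinset) (p := fun z => T.G.dist x z = m + 1)
  rw [hdeg] at hsplit
  rcases Nat.eq_zero_or_pos m with hm | hm
  · subst hm
    have : (T.nbrFin w).toFinset.filter (fun z => ¬ T.G.dist x z = 0 + 1) = ∅ := by
      ext z
      simp only [Finset.mem_filter, Set.Finite.mem_toFinset, Set.mem_setOf_eq,
        Finset.notMem_empty, iff_false, not_and]
      intro hz
      have := adj_dist_cases T x hz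
      rw [hd] at this
      omega
    rw [this, Finset.card_empty] at hsplit
    rw [if_pos rfl]
    rw [hsame]
    omega
  · obtain ⟨k, rfl⟩ : ∃ k, m = k + 1 := ⟨m - 1, by omega⟩
    have hneg : (T.nbrFin w).toFinset.filter (fun z => ¬ T.G.dist x z = (k + 1) + 1)
        = (T.sphere x k).filter (fun z => T.G.Adj z w) := by
      rw [hsame k]
      ext z
      simp only [Finset.mem_filter, Set.Finite.mem_toFinset, Set.mem_setOf_eq]
      constructor
      · rintro ⟨hz, hzd⟩
        refine ⟨hz, ?_⟩
        have := adj_dist_cases T x hz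
        rw [hd] at this
        omega
      · rintro ⟨hz, hzd⟩
        exact ⟨hz, by omega⟩
    rw [hneg, card_parent T hd] at hsplit
    simp only [Nat.succ_ne_zero, if_false]
    rw [hsame]
    omega


/-- The number of neighbours in `S(x,n)` of a point of `S(x,n-1)`. -/
def cnum (q n : ℕ) : ℕ := if n = 0 then 0 else if n = 1 then q + 1 else q

lemma sphere_disjoint (x : T.V) {m n : ℕ} (h : m ≠ n) :
    Disjoint (T.sphere x m) (T.sphere x n) := by
  rw [Finset.disjoint_left]
  intro a ham han
  rw [mem_sphere] at ham han
  omega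

lemma key_sum (x : T.V) (n : ℕ) (f : T.V → ℂ) :
    ∑ z ∈ T.sphere x n, ∑ w ∈ T.sphere z 1, f w
      = ∑ w ∈ T.sphere x (n + 1), f w
        + (cnum q n : ℂ) * ∑ w ∈ T.sphere x (n - 1), f w := by
  rcases n with _ | k
  · simp [sphere_zero, cnum]
  simp only [Nat.add_sub_cancel]
  set W := T.sphere x (k + 2) ∪ T.sphere x k with hW
  have hsub : ∀ z ∈ T.sphere x (k + 1), T.sphere z 1 = W.filter (fun w => T.G.Adj z w) := by
    intro z hz
    rw [mem_sphere] at hz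
    ext w
    rw [mem_sphere_one, Finset.mem_filter, hW, Finset.mem_union, mem_sphere, mem_sphere]
    constructor
    · intro hzw
      refine ⟨?_, hzw⟩
      have := adj_dist_cases T x hzw
      omega
    · exact fun h => h.2
  calc ∑ z ∈ T.sphere x (k + 1), ∑ w ∈ T.sphere z 1, f w
      = ∑ z ∈ T.sphere x (k + 1), ∑ w ∈ W, if T.G.Adj z w then f w else 0 := by
        refine Finset.sum_congr rfl fun z hz => ?_
        rw [hsub z hz, Finset.sum_filter]
    _ = ∑ w ∈ W, ∑ z ∈ T.sphere x (k + 1), if T.G.Adj z w then f w else 0 := Finset.sum_comm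
    _ = ∑ w ∈ W, ((T.sphere x (k + 1)).filter (fun z => T.G.Adj z w)).card • f w := by
        refine Finset.sum_congr rfl fun w _ => ?_
        rw [← Finset.sum_filter, Finset.sum_const]
    _ = ∑ w ∈ T.sphere x (k + 2), ((T.sphere x (k + 1)).filter (fun z => T.G.Adj z w)).card • f w
        + ∑ w ∈ T.sphere x k, ((T.sphere x (k + 1)).filter (fun z => T.G.Adj z w)).card • f w := by
        rw [hW, Finset.sum_union (sphere_disjoint T x (by omega))]
    _ = ∑ w ∈ T.sphere x (k + 2), f w + (cnum q (k + 1) : ℂ) * ∑ w ∈ T.sphere x k, f w := by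
        congr 1
        · refine Finset.sum_congr rfl fun w hw => ?_
          rw [mem_sphere] at hw
          rw [card_parent T hw, one_smul]
        · rw [Finset.mul_sum]
          refine Finset.sum_congr rfl fun w hw => ?_
          rw [mem_sphere] at hw
          rw [card_children T hw, nsmul_eq_mul]
          congr 2
          rcases Nat.eq_zero_or_pos k with hk | hk
          · simp [cnum, hk]
          · simp only [cnum]
            rw [if_neg (by omega), if_neg (by omega), if_neg (by omega)]


/-- Abstract Ásgeirsson-type symmetry from a symmetric-form recursion. -/
lemma symm_of_rec (H : ℕ → ℕ → ℂ) (c : ℕ → ℂ) (hc0 : c 0 = 0)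
    (hrec : ∀ m n : ℕ, H (m + 1) n + c m * H (m - 1) n = H m (n + 1) + c n * H m (n - 1)) :
    ∀ a b : ℕ, H a b = H b a := by
  set D : ℕ → ℕ → ℂ := fun a b => H a b - H b a with hD
  suffices hmain : ∀ s : ℕ, ∀ a b : ℕ, a + b = s → D a b = 0 by
    intro a b
    have := hmain (a + b) a b rfl
    rw [hD] at this
    linear_combination this
  intro s
  induction s using Nat.strong_induction_on with
  | _ s IH =>
    -- step relation along the antidiagonal
    have hstep : ∀ a b : ℕ, a + 1 + b = s → D (a + 1) b = D a (b + 1) := by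
      intro a b hab
      have e1 := hrec a b
      have e2 := hrec b a
      have h3 : c b * D a (b - 1) = 0 := by
        rcases Nat.eq_zero_or_pos b with hb | hb
        · rw [hb, hc0]; ring
        · rw [IH (s - 2) (by omega) a (b - 1) (by omega)]; ring
      have h4 : c a * D (a - 1) b = 0 := by
        rcases Nat.eq_zero_or_pos a with ha | ha
        · rw [ha, hc0]; ring
        · rw [IH (s - 2) (by omega) (a - 1) b (by omega)]; ring
      rw [hD] at h3 h4 ⊢
      simp only at h3 h4 ⊢
      linear_combination e1 + e2 + h3 - h4
    -- hence D is constant along the antidiagonal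
    have hconst : ∀ a b : ℕ, a + b = s → D a b = D 0 s := by
      intro a
      induction a with
      | zero => intro b hb; rw [Nat.zero_add] at hb; rw [hb]
      | succ a ih =>
        intro b hb
        rw [hstep a b hb, ih (b + 1) (by omega)]
    intro a b hab
    have h1 := hconst s 0 (by omega)
    have h2 : D 0 s = - D s 0 := by rw [hD]; simp only; ring
    have h0 : D 0 s = 0 := by
      rw [h2] at h1 ⊢
      linear_combination (-1/2 : ℂ) * h1
    rw [hconst a b hab, h0]


lemma base_identity (U : T.V → T.V → ℂ)
    (hU : ∀ x y : T.V, T.lap (fun x' => U x' y) x = T.lap (fun y' => U x y') y)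
    (a b : T.V) : ∑ w ∈ T.sphere a 1, U w b = ∑ w ∈ T.sphere b 1, U a w := by
  have h := hU a b
  simp only [HomTree.lap] at h
  have hq : (1 : ℂ) / ((q : ℂ) + 1) ≠ 0 := one_div_ne_zero (Nat.cast_add_one_ne_zero q)
  have h2 : (1 : ℂ) / ((q : ℂ) + 1) * ∑ w ∈ T.sphere a 1, U w b
      = (1 : ℂ) / ((q : ℂ) + 1) * ∑ w ∈ T.sphere b 1, U a w := by
    linear_combination -h
  exact mul_left_cancel₀ hq h2

lemma H_rec (U : T.V → T.V → ℂ)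
    (hU : ∀ x y : T.V, T.lap (fun x' => U x' y) x = T.lap (fun y' => U x y') y)
    (x y : T.V) (m n : ℕ) :
    (∑ x' ∈ T.sphere x (m + 1), ∑ y' ∈ T.sphere y n, U x' y')
        + (cnum q m : ℂ) * ∑ x' ∈ T.sphere x (m - 1), ∑ y' ∈ T.sphere y n, U x' y'
      = (∑ x' ∈ T.sphere x m, ∑ y' ∈ T.sphere y (n + 1), U x' y')
        + (cnum q n : ℂ) * ∑ x' ∈ T.sphere x m, ∑ y' ∈ T.sphere y (n - 1), U x' y' := by
  calc (∑ x' ∈ T.sphere x (m + 1), ∑ y' ∈ T.sphere y n, U x' y')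
        + (cnum q m : ℂ) * ∑ x' ∈ T.sphere x (m - 1), ∑ y' ∈ T.sphere y n, U x' y'
      = ∑ y' ∈ T.sphere y n, ((∑ x' ∈ T.sphere x (m + 1), U x' y')
          + (cnum q m : ℂ) * ∑ x' ∈ T.sphere x (m - 1), U x' y') := by
        rw [Finset.sum_add_distrib, ← Finset.mul_sum,
          Finset.sum_comm (s := T.sphere x (m + 1)),
          Finset.sum_comm (s := T.sphere x (m - 1))]
    _ = ∑ y' ∈ T.sphere y n, ∑ z ∈ T.sphere x m, ∑ w ∈ T.sphere z 1, U w y' := by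
        refine Finset.sum_congr rfl fun y' _ => ?_
        rw [key_sum T x m (fun w => U w y')]
    _ = ∑ z ∈ T.sphere x m, ∑ y' ∈ T.sphere y n, ∑ w ∈ T.sphere z 1, U w y' :=
        Finset.sum_comm
    _ = ∑ z ∈ T.sphere x m, ∑ y' ∈ T.sphere y n, ∑ w ∈ T.sphere y' 1, U z w := by
        refine Finset.sum_congr rfl fun z _ => Finset.sum_congr rfl fun y' _ => ?_
        exact base_identity T U hU z y'
    _ = ∑ z ∈ T.sphere x m, ((∑ w ∈ T.sphere y (n + 1), U z w)
          + (cnum q n : ℂ) * ∑ w ∈ T.sphere y (n - 1), U z w) := by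
        refine Finset.sum_congr rfl fun z _ => ?_
        rw [key_sum T y n (fun w => U z w)]
    _ = (∑ x' ∈ T.sphere x m, ∑ y' ∈ T.sphere y (n + 1), U x' y')
        + (cnum q n : ℂ) * ∑ x' ∈ T.sphere x m, ∑ y' ∈ T.sphere y (n - 1), U x' y' := by
        rw [Finset.sum_add_distrib, ← Finset.mul_sum]

end AsgAux

open HomTree in
/-- special case of the discrete Ásgeirsson theorem. -/
theorem stmt3 {q : ℕ} (hq : 2 ≤ q) (T : HomTree q) (U : T.V → T.V → ℂ)
    (hU : ∀ x y : T.V, T.lap (fun x' => U x' y) x = T.lap (fun y' => U x y') y) :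
    ∀ (x y : T.V) (n : ℕ),
      ∑ x' ∈ T.sphere x n, U x' y = ∑ y' ∈ T.sphere y n, U x y' := by
  intro x y n
  have hsym := AsgAux.symm_of_rec
    (fun m n => ∑ x' ∈ T.sphere x m, ∑ y' ∈ T.sphere y n, U x' y')
    (fun m => (AsgAux.cnum q m : ℂ)) (by simp [AsgAux.cnum])
    (fun m n => AsgAux.H_rec T U hU x y m n) n 0
  simpa [AsgAux.sphere_zero] using hsym
end

section
/- (Explicit form of the dual Abel transform.) For every even function F : ℤ → ℂ (F(−k) = F(k)) and every n ≥ 1: (1/δ(n))·Σ_{x : |x| = n} q^(h(x)/2)·F(h(x)) = (2q/(q+1))·q^(−n/2)·F(n) + ((q−1)/(q+1))·q^(−n/2)·Σ_{k : −n < k < n, k ≡ n (mod 2)} F(k), while for n = 0 the left-hand side equals F(0). -/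
open scoped BigOperators

open SimpleGraph Finset

variable {V : Type} [DecidableEq V] {G : SimpleGraph V}

lemma dist_split (hc : G.Connected) {o z y : V} (P : G.Walk o z)
    (hP : P.length = G.dist o z) (hy : y ∈ P.support) :
    G.dist o y + G.dist y z = G.dist o z := by
  have hsp := congrArg SimpleGraph.Walk.length (P.take_spec hy)
  rw [SimpleGraph.Walk.length_append] at hsp
  have h1 : G.dist o y ≤ (P.takeUntil y hy).length := SimpleGraph.dist_le _
  have h2 : G.dist y z ≤ (P.dropUntil y hy).length := SimpleGraph.dist_le _
  have h3 := hc.dist_triangle (u := o) (v := y) (w := z)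
  omega

/-- In a tree, a vertex at distance `n+1` from `o` has a unique neighbour at distance `n`. -/
lemma parent_unique (hc : G.Connected) (ha : G.IsAcyclic) {o y : V} {n : ℕ}
    (hy : G.dist o y = n + 1) : ∃! z : V, G.Adj y z ∧ G.dist o z = n := by
  obtain ⟨P, hPp, hPl⟩ := hc.exists_path_of_dist o y
  have hyo : y ≠ o := by
    intro h; subst h; simp [SimpleGraph.dist_self] at hy
  obtain ⟨x, hadj, p', hco⟩ := SimpleGraph.Walk.exists_eq_cons_of_ne hyo P.reverse
  have hlen : p'.length = n := by
    have := congrArg SimpleGraph.Walk.length hco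
    rw [SimpleGraph.Walk.length_reverse, SimpleGraph.Walk.length_cons] at this
    omega
  have hdx : G.dist o x = n := by
    have hle : G.dist o x ≤ n := by
      have := SimpleGraph.dist_le p'.reverse
      rwa [SimpleGraph.Walk.length_reverse, hlen] at this
    have hge : n + 1 ≤ G.dist o x + 1 := by
      have h1 : G.dist x y = 1 := SimpleGraph.dist_eq_one_iff_adj.mpr hadj.symm
      have := hc.dist_triangle (u := o) (v := x) (w := y)
      omega
    omega
  refine ⟨x, ⟨hadj, hdx⟩, ?_⟩
  rintro z ⟨hz, hdz⟩
  have key : ∀ w : V, G.Adj y w → G.dist o w = n → ∃ Q : G.Walk o y,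
      Q.IsPath ∧ Q.reverse.getVert 1 = w := by
    intro w hw hdw
    obtain ⟨Pw, hPwp, hPwl⟩ := hc.exists_path_of_dist o w
    have hns : y ∉ Pw.support := by
      intro hmem
      have := dist_split hc Pw (by rw [hPwl, hdw]) hmem
      omega
    have hns' : y ∉ Pw.reverse.support := by
      rwa [SimpleGraph.Walk.support_reverse, List.mem_reverse]
    have hQ1 : (SimpleGraph.Walk.cons hw Pw.reverse).IsPath := (hPwp.reverse).cons hns'
    refine ⟨(SimpleGraph.Walk.cons hw Pw.reverse).reverse, hQ1.reverse, ?_⟩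
    rw [SimpleGraph.Walk.reverse_reverse]
    exact (SimpleGraph.Walk.getVert_cons_succ _ _).trans (SimpleGraph.Walk.getVert_zero _)
  obtain ⟨Q1, hQ1, hg1⟩ := key x hadj hdx
  obtain ⟨Q2, hQ2, hg2⟩ := key z hz hdz
  have : (⟨Q1, hQ1⟩ : G.Path o y) = ⟨Q2, hQ2⟩ := ha.path_unique _ _
  have hQQ : Q1 = Q2 := congrArg Subtype.val this
  rw [hQQ, hg2] at hg1
  exact hg1
/-- In a tree, adjacent vertices are at different distances from any root. -/
lemma adj_dist_ne (hc : G.Connected) (ha : G.IsAcyclic) {o y z : V}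
    (hadj : G.Adj y z) : G.dist o y ≠ G.dist o z := by
  intro heq
  rcases Nat.eq_zero_or_pos (G.dist o z) with h0 | hpos
  · have hy0 : o = y := (hc.dist_eq_zero_iff).mp (by omega)
    have hz0 : o = z := (hc.dist_eq_zero_iff).mp h0
    rw [← hy0, ← hz0] at hadj; exact G.irrefl hadj
  · obtain ⟨P, hPp, hPl⟩ := hc.exists_path_of_dist o z
    have hns : y ∉ P.support := by
      intro hmem
      have h := dist_split hc P hPl hmem
      have h2 : G.dist y z = 0 := by omega
      have : y = z := (hc.dist_eq_zero_iff).mp h2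
      rw [this] at hadj; exact G.irrefl hadj
    have hns' : y ∉ P.reverse.support := by
      rwa [SimpleGraph.Walk.support_reverse, List.mem_reverse]
    have hQ0 : (SimpleGraph.Walk.cons hadj P.reverse).IsPath := (hPp.reverse).cons hns'
    have hQ : ((SimpleGraph.Walk.cons hadj P.reverse).reverse).IsPath := hQ0.reverse
    obtain ⟨P', hP'p, hP'l⟩ := hc.exists_path_of_dist o y
    have : (⟨_, hQ⟩ : G.Path o y) = ⟨P', hP'p⟩ := ha.path_unique _ _
    have hll := congrArg (fun p : G.Path o y => p.val.length) this
    simp only [SimpleGraph.Walk.length_reverse, SimpleGraph.Walk.length_cons] at hll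
    omega

/-- Distances to a root of adjacent vertices differ by exactly one. -/
lemma adj_dist_cases (hc : G.Connected) (ha : G.IsAcyclic) {o y z : V}
    (hadj : G.Adj y z) : G.dist o z = G.dist o y + 1 ∨ G.dist o y = G.dist o z + 1 := by
  have h1 : G.dist y z = 1 := SimpleGraph.dist_eq_one_iff_adj.mpr hadj
  have h2 : G.dist z y = 1 := SimpleGraph.dist_eq_one_iff_adj.mpr hadj.symm
  have t1 := hc.dist_triangle (u := o) (v := y) (w := z)
  have t2 := hc.dist_triangle (u := o) (v := z) (w := y)
  have hne := adj_dist_ne hc ha (o := o) hadj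
  omega

open scoped Classical

namespace StmtAux

variable {q : ℕ} (T : HomTree q)

lemma mem_sphere {o x : T.V} {n : ℕ} : x ∈ T.sphere o n ↔ T.G.dist o x = n := by
  simp [HomTree.sphere, Set.Finite.mem_toFinset]

/-- The neighbour finset. -/
noncomputable def Nb (y : T.V) : Finset T.V := (T.nbrFin y).toFinset

lemma mem_Nb {y z : T.V} : z ∈ Nb T y ↔ T.G.Adj y z := by
  simp [Nb, Set.Finite.mem_toFinset]

lemma card_Nb (y : T.V) : (Nb T y).card = q + 1 := T.degree y

section H

variable (ω : ℤ → T.V) (H : T.V → ℤ)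
variable (hH : ∀ x : T.V, ∀ᶠ n : ℕ in Filter.atTop,
      (n : ℤ) - (T.G.dist x (ω (n : ℤ)) : ℤ) = H x)

include hH

lemma H_step {y z : T.V} (hadj : T.G.Adj y z) : H z = H y + 1 ∨ H z = H y - 1 := by
  obtain ⟨n, hy, hz⟩ := ((hH y).and (hH z)).exists
  have hc := adj_dist_cases T.conn T.acyclic (o := ω n) hadj
  rw [SimpleGraph.dist_comm] at hy
  rw [SimpleGraph.dist_comm] at hz
  omega

lemma H_toward (y : T.V) :
    ((Nb T y).filter (fun z => H z = H y + 1)).card = 1 := by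
  have h1 : ∀ᶠ n : ℕ in Filter.atTop, ∀ z ∈ insert y (Nb T y),
      (n : ℤ) - (T.G.dist z (ω (n : ℤ)) : ℤ) = H z :=
    (Filter.eventually_all_finset _).mpr (fun z _ => hH z)
  have h2 : ∀ᶠ n : ℕ in Filter.atTop, (H y).toNat + 1 ≤ n := Filter.eventually_ge_atTop _
  obtain ⟨n, hall, hbig⟩ := (h1.and h2).exists
  have hy := hall y (Finset.mem_insert_self _ _)
  have hpos : 1 ≤ T.G.dist (ω (n:ℤ)) y := by
    rw [SimpleGraph.dist_comm]
    omega
  obtain ⟨m, hm⟩ : ∃ m, T.G.dist (ω (n:ℤ)) y = m + 1 :=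
    ⟨T.G.dist (ω (n:ℤ)) y - 1, by omega⟩
  obtain ⟨z₀, ⟨hz₀a, hz₀d⟩, huniq⟩ := parent_unique T.conn T.acyclic (o := ω (n:ℤ)) hm
  rw [Finset.card_eq_one]
  refine ⟨z₀, ?_⟩
  ext w
  simp only [Finset.mem_filter, Finset.mem_singleton, mem_Nb]
  constructor
  · rintro ⟨hw, hHw⟩
    have hwd := hall w (Finset.mem_insert_of_mem ((mem_Nb T).mpr hw))
    refine huniq w ⟨hw, ?_⟩
    rw [SimpleGraph.dist_comm] at hwd hy
    omega
  · intro hw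
    rw [hw]
    have hwd := hall z₀ (Finset.mem_insert_of_mem ((mem_Nb T).mpr hz₀a))
    refine ⟨hz₀a, ?_⟩
    rw [SimpleGraph.dist_comm] at hwd hy
    omega

/-- Sum of `g ∘ H` over the neighbours of `y`. -/
lemma nbr_sum (g : ℤ → ℂ) (y : T.V) :
    ∑ z ∈ Nb T y, g (H z) = g (H y + 1) + (q : ℂ) * g (H y - 1) := by
  classical
  rw [← Finset.sum_filter_add_sum_filter_not (Nb T y) (fun z => H z = H y + 1)]
  have hcard1 := H_toward T ω H hH y
  have hsub : (Nb T y).filter (fun z => ¬ H z = H y + 1)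
      = (Nb T y).filter (fun z => H z = H y - 1) := by
    ext z
    simp only [Finset.mem_filter, mem_Nb]
    constructor
    · rintro ⟨hz, hne⟩
      rcases H_step T ω H hH hz with h | h
      · exact absurd h hne
      · exact ⟨hz, h⟩
    · rintro ⟨hz, hh⟩
      exact ⟨hz, by omega⟩
  have hcard2 : ((Nb T y).filter (fun z => ¬ H z = H y + 1)).card = q := by
    have := Finset.card_filter_add_card_filter_not
      (s := Nb T y) (p := fun z => H z = H y + 1)
    rw [card_Nb] at this
    omega
  rw [Finset.sum_congr rfl (fun z hz => by
        rw [(Finset.mem_filter.mp hz).2]),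
      Finset.sum_const, hcard1]
  rw [Finset.sum_congr (hsub) (fun z hz => by
        rw [(Finset.mem_filter.mp hz).2]),
      ]
  rw [Finset.sum_const]
  have : ((Nb T y).filter (fun z => H z = H y - 1)).card = q := by rw [← hsub]; exact hcard2
  rw [this]
  simp [mul_comm]

end H

section Count

variable {q : ℕ} (T : HomTree q) (o : T.V)

lemma sphere_zero : T.sphere o 0 = {o} := by
  ext x
  rw [mem_sphere, Finset.mem_singleton]
  constructor
  · intro h
    exact ((T.conn.dist_eq_zero_iff).mp h).symm
  · rintro rfl
    exact SimpleGraph.dist_self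

lemma sphere_one : T.sphere o 1 = Nb T o := by
  ext x
  rw [mem_sphere, mem_Nb]
  exact SimpleGraph.dist_eq_one_iff_adj

lemma parent_card {z : T.V} {n : ℕ} (hz : T.G.dist o z = n + 1) :
    ((Nb T z).filter (fun y => T.G.dist o y = n)).card = 1 := by
  obtain ⟨y₀, ⟨hy₀a, hy₀d⟩, huniq⟩ := parent_unique T.conn T.acyclic (o := o) hz
  rw [Finset.card_eq_one]
  refine ⟨y₀, ?_⟩
  ext w
  simp only [Finset.mem_filter, Finset.mem_singleton, mem_Nb]
  constructor
  · rintro ⟨hw, hwd⟩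
    exact huniq w ⟨hw, hwd⟩
  · intro hw
    rw [hw]
    exact ⟨hy₀a, hy₀d⟩

lemma children_card {z : T.V} {n : ℕ} (hz : T.G.dist o z = n) :
    ((Nb T z).filter (fun y => T.G.dist o y = n + 1)).card
      = if n = 0 then q + 1 else q := by
  rcases Nat.eq_zero_or_pos n with rfl | hpos
  · have hzo : o = z := (T.conn.dist_eq_zero_iff).mp hz
    subst hzo
    have : (Nb T o).filter (fun y => T.G.dist o y = 0 + 1) = Nb T o := by
      refine Finset.filter_true_of_mem (fun y hy => ?_)
      rcases adj_dist_cases T.conn T.acyclic (o := o) ((mem_Nb T).mp hy) with h | h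
      · rw [h, SimpleGraph.dist_self]
      · rw [SimpleGraph.dist_self] at h; omega
    rw [this, card_Nb]
    simp
  · obtain ⟨m, rfl⟩ : ∃ m, n = m + 1 := ⟨n - 1, by omega⟩
    have hneg : (Nb T z).filter (fun y => ¬ T.G.dist o y = m + 1 + 1)
        = (Nb T z).filter (fun y => T.G.dist o y = m) := by
      ext y
      simp only [Finset.mem_filter, mem_Nb]
      constructor
      · rintro ⟨hy, hne⟩
        rcases adj_dist_cases T.conn T.acyclic (o := o) ((mem_Nb T).mp
          ((mem_Nb T).mpr hy)) with h | h
        · rw [hz] at h; omega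
        · rw [hz] at h; exact ⟨hy, by omega⟩
      · rintro ⟨hy, hyd⟩
        exact ⟨hy, by omega⟩
    have htot := Finset.card_filter_add_card_filter_not
      (s := Nb T z) (p := fun y => T.G.dist o y = m + 1 + 1)
    rw [hneg, card_Nb, parent_card T o (n := m) hz] at htot
    rw [if_neg (Nat.succ_ne_zero m)]
    omega

variable (H : T.V → ℤ)

/-- Swapping a double sum over adjacent pairs between two spheres. -/
lemma swap_sum (g : ℤ → ℂ) (n k c : ℕ)
    (hcard : ∀ z, T.G.dist o z = k →
      ((Nb T z).filter (fun y => T.G.dist o y = n)).card = c) :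
    ∑ y ∈ T.sphere o n, ∑ z ∈ (Nb T y).filter (fun z => T.G.dist o z = k), g (H z)
      = (c : ℂ) * ∑ z ∈ T.sphere o k, g (H z) := by
  have hinner : ∀ y ∈ T.sphere o n,
      ∑ z ∈ (Nb T y).filter (fun z => T.G.dist o z = k), g (H z)
        = ∑ z ∈ T.sphere o k, if T.G.Adj y z then g (H z) else 0 := by
    intro y _
    rw [← Finset.sum_filter]
    congr 1
    ext z
    simp only [Finset.mem_filter, mem_Nb, mem_sphere]
    tauto
  rw [Finset.sum_congr rfl hinner, Finset.sum_comm]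
  rw [Finset.mul_sum]
  refine Finset.sum_congr rfl (fun z hz => ?_)
  rw [← Finset.sum_filter]
  have : (T.sphere o n).filter (fun y => T.G.Adj y z)
      = (Nb T z).filter (fun y => T.G.dist o y = n) := by
    ext y
    simp only [Finset.mem_filter, mem_Nb, mem_sphere]
    constructor
    · rintro ⟨h1, h2⟩; exact ⟨h2.symm, h1⟩
    · rintro ⟨h1, h2⟩; exact ⟨h2, h1.symm⟩
  rw [this, Finset.sum_const, hcard z ((mem_sphere T).mp hz)]
  simp [mul_comm]

variable (ω : ℤ → T.V)
variable (hH : ∀ x : T.V, ∀ᶠ n : ℕ in Filter.atTop,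
      (n : ℤ) - (T.G.dist x (ω (n : ℤ)) : ℤ) = H x)

include hH

/-- The basic two-step recursion for sphere sums. -/
lemma sphere_rec (g : ℤ → ℂ) {n : ℕ} (hn : 1 ≤ n) :
    (∑ x ∈ T.sphere o (n+1), g (H x))
      + (if n = 1 then ((q : ℂ) + 1) else (q : ℂ)) * ∑ x ∈ T.sphere o (n-1), g (H x)
    = ∑ y ∈ T.sphere o n, (g (H y + 1) + (q : ℂ) * g (H y - 1)) := by
  have hsplit : ∀ y ∈ T.sphere o n,
      g (H y + 1) + (q : ℂ) * g (H y - 1)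
        = (∑ z ∈ (Nb T y).filter (fun z => T.G.dist o z = n + 1), g (H z))
          + ∑ z ∈ (Nb T y).filter (fun z => T.G.dist o z = n - 1), g (H z) := by
    intro y hy
    have hyd : T.G.dist o y = n := (mem_sphere T).mp hy
    have hneg : (Nb T y).filter (fun z => ¬ T.G.dist o z = n + 1)
        = (Nb T y).filter (fun z => T.G.dist o z = n - 1) := by
      ext z
      simp only [Finset.mem_filter, mem_Nb]
      constructor
      · rintro ⟨hz, hne⟩
        rcases adj_dist_cases T.conn T.acyclic (o := o) ((mem_Nb T).mp
          ((mem_Nb T).mpr hz)) with h | h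
        · rw [hyd] at h; omega
        · rw [hyd] at h; exact ⟨hz, by omega⟩
      · rintro ⟨hz, hzd⟩
        exact ⟨hz, by omega⟩
    rw [← nbr_sum T ω H hH g y, ← Finset.sum_filter_add_sum_filter_not (Nb T y)
      (fun z => T.G.dist o z = n + 1), hneg]
  rw [Finset.sum_congr rfl hsplit, Finset.sum_add_distrib]
  congr 1
  · rw [swap_sum T o H g n (n+1) 1 (fun z hz => parent_card T o hz)]
    simp
  · have hc : ∀ z, T.G.dist o z = n - 1 →
        ((Nb T z).filter (fun y => T.G.dist o y = n)).card
          = if n - 1 = 0 then q + 1 else q := by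
      intro z hz
      have := children_card T o (n := n - 1) hz
      rwa [Nat.sub_add_cancel hn] at this
    rcases Nat.eq_or_lt_of_le hn with h1 | h2
    · rw [swap_sum T o H g n (n-1) (q+1) (fun z hz => by rw [hc z hz]; simp [← h1])]
      rw [if_pos h1.symm]
      push_cast
      ring
    · rw [swap_sum T o H g n (n-1) q (fun z hz => by rw [hc z hz, if_neg (by omega)])]
      rw [if_neg (by omega)]

end Count

section Closed

variable {q : ℕ} (T : HomTree q) (o : T.V) (H : T.V → ℤ) (ω : ℤ → T.V)
variable (hH : ∀ x : T.V, ∀ᶠ n : ℕ in Filter.atTop,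
      (n : ℤ) - (T.G.dist x (ω (n : ℤ)) : ℤ) = H x)

include hH

lemma closed_form (hHo : H o = 0) : ∀ n : ℕ, 1 ≤ n → ∀ g : ℤ → ℂ,
    ∑ x ∈ T.sphere o n, g (H x)
      = g (n : ℤ) + (q : ℂ) ^ n * g (-(n : ℤ))
        + ((q : ℂ) - 1) * ∑ j ∈ Finset.Icc 1 (n - 1), (q : ℂ) ^ (j - 1) * g ((n : ℤ) - 2 * (j : ℤ)) := by
  intro n
  induction n using Nat.strong_induction_on with
  | _ n IH =>
  intro hn g
  have hone : ∀ g' : ℤ → ℂ, ∑ x ∈ T.sphere o 1, g' (H x) = g' 1 + (q : ℂ) * g' (-1) := by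
    intro g'
    rw [sphere_one, nbr_sum T ω H hH g' o, hHo]
    norm_num
  have hzero : ∀ g' : ℤ → ℂ, ∑ x ∈ T.sphere o 0, g' (H x) = g' 0 := by
    intro g'
    rw [sphere_zero, Finset.sum_singleton, hHo]
  match n, hn with
  | 1, _ =>
    rw [hone g]
    norm_num
  | 2, _ =>
    have hrec := sphere_rec T o H ω hH g (le_refl 1)
    rw [if_pos rfl] at hrec
    have h1 : ∑ y ∈ T.sphere o 1, (g (H y + 1) + (q : ℂ) * g (H y - 1))
        = (g (1 + 1) + (q : ℂ) * g (-1 + 1)) + (q : ℂ) * (g (1 - 1) + (q : ℂ) * g (-1 - 1)) :=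
      hone (fun h => g (h + 1) + (q : ℂ) * g (h - 1))
    rw [h1, hzero g] at hrec
    have : (2:ℕ) - 1 = 1 := rfl
    rw [this, Finset.Icc_self, Finset.sum_singleton]
    norm_num at hrec ⊢
    linear_combination hrec
  | (m+3), _ =>
    have hrec := sphere_rec T o H ω hH g (by omega : 1 ≤ m + 2)
    rw [if_neg (by omega : ¬ m + 2 = 1)] at hrec
    have er1 : m + 2 + 1 = m + 3 := rfl
    have er2 : m + 2 - 1 = m + 1 := rfl
    rw [er1, er2] at hrec
    have hIH1 : ∑ y ∈ T.sphere o (m+2), (g (H y + 1) + (q : ℂ) * g (H y - 1))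
        = (g (((m+2:ℕ) : ℤ) + 1) + (q : ℂ) * g (((m+2:ℕ) : ℤ) - 1))
          + (q : ℂ) ^ (m+2) * (g (-((m+2:ℕ) : ℤ) + 1) + (q : ℂ) * g (-((m+2:ℕ) : ℤ) - 1))
          + ((q : ℂ) - 1) * ∑ j ∈ Finset.Icc 1 (m+2-1), (q : ℂ) ^ (j - 1) *
              (g (((m+2:ℕ) : ℤ) - 2 * (j : ℤ) + 1) + (q : ℂ) * g (((m+2:ℕ) : ℤ) - 2 * (j : ℤ) - 1)) :=
      IH (m+2) (by omega) (by omega) (fun h => g (h + 1) + (q : ℂ) * g (h - 1))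
    have hIH2 := IH (m+1) (by omega) (by omega) g
    rw [show m + 1 - 1 = m from rfl] at hIH2
    rw [hIH1, hIH2] at hrec
    -- abbreviate the three sums
    set T1 := ∑ j ∈ Finset.Icc 1 (m+1), (q : ℂ) ^ (j - 1) * g (((m+3:ℕ) : ℤ) - 2 * (j : ℤ)) with hT1
    set T2 := ∑ j ∈ Finset.Icc 1 m, (q : ℂ) ^ (j - 1) * g (((m+1:ℕ) : ℤ) - 2 * (j : ℤ)) with hT2
    have hs1 : ∑ j ∈ Finset.Icc 1 (m+2-1), (q : ℂ) ^ (j - 1) *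
              (g (((m+2:ℕ) : ℤ) - 2 * (j : ℤ) + 1) + (q : ℂ) * g (((m+2:ℕ) : ℤ) - 2 * (j : ℤ) - 1))
        = T1 + (q : ℂ) * (T2 + (q : ℂ) ^ m * g (-((m+1:ℕ) : ℤ))) := by
      have e0 : m + 2 - 1 = m + 1 := rfl
      rw [e0]
      have split : ∑ j ∈ Finset.Icc 1 (m+1), (q : ℂ) ^ (j - 1) *
              (g (((m+2:ℕ) : ℤ) - 2 * (j : ℤ) + 1) + (q : ℂ) * g (((m+2:ℕ) : ℤ) - 2 * (j : ℤ) - 1))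
          = ∑ j ∈ Finset.Icc 1 (m+1), ((q : ℂ) ^ (j - 1) * g (((m+3:ℕ) : ℤ) - 2 * (j : ℤ))
              + (q : ℂ) * ((q : ℂ) ^ (j - 1) * g (((m+1:ℕ) : ℤ) - 2 * (j : ℤ)))) := by
        refine Finset.sum_congr rfl fun j hj => ?_
        have e1 : ((m+2:ℕ) : ℤ) - 2 * (j : ℤ) + 1 = ((m+3:ℕ) : ℤ) - 2 * (j : ℤ) := by push_cast; ring
        have e2 : ((m+2:ℕ) : ℤ) - 2 * (j : ℤ) - 1 = ((m+1:ℕ) : ℤ) - 2 * (j : ℤ) := by push_cast; ring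
        rw [e1, e2]; ring
      rw [split, Finset.sum_add_distrib, ← Finset.mul_sum]
      have etop : ∑ j ∈ Finset.Icc 1 (m+1), (q : ℂ) ^ (j - 1) * g (((m+1:ℕ) : ℤ) - 2 * (j : ℤ))
          = T2 + (q : ℂ) ^ m * g (-((m+1:ℕ) : ℤ)) := by
        rw [Finset.sum_Icc_succ_top (by omega : 1 ≤ m + 1)]
        rw [show (m + 1) - 1 = m from rfl,
          show ((m+1:ℕ) : ℤ) - 2 * ((m+1:ℕ) : ℤ) = -((m+1:ℕ) : ℤ) by push_cast; ring]
      rw [etop]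
    have htop : ∑ j ∈ Finset.Icc 1 (m+3-1), (q : ℂ) ^ (j - 1) * g (((m+3:ℕ) : ℤ) - 2 * (j : ℤ))
        = T1 + (q : ℂ) ^ (m+1) * g (-((m+1:ℕ) : ℤ)) := by
      have e0 : m + 3 - 1 = (m + 1) + 1 := rfl
      rw [e0, Finset.sum_Icc_succ_top (by omega : 1 ≤ m + 2)]
      rw [show (m + 2) - 1 = m + 1 from rfl,
        show ((m+3:ℕ) : ℤ) - 2 * ((m+2:ℕ) : ℤ) = -((m+1:ℕ) : ℤ) by push_cast; ring]
    rw [hs1] at hrec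
    rw [htop]
    have ec1 : g (((m+2:ℕ) : ℤ) + 1) = g (((m+3:ℕ) : ℤ)) := by congr 1 <;> omega
    have ec2 : g (((m+2:ℕ) : ℤ) - 1) = g (((m+1:ℕ) : ℤ)) := by congr 1 <;> omega
    have ec3 : g (-((m+2:ℕ) : ℤ) + 1) = g (-((m+1:ℕ) : ℤ)) := by congr 1 <;> omega
    have ec4 : g (-((m+2:ℕ) : ℤ) - 1) = g (-((m+3:ℕ) : ℤ)) := by congr 1 <;> omega
    rw [ec1, ec2, ec3, ec4] at hrec
    have epow : ((q:ℂ))^(m+3) = (q:ℂ)^(m+2) * q := by ring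
    rw [epow]
    linear_combination hrec

end Closed

section Qpow

variable {q : ℕ}

lemma qpow_add (hq : 0 < q) (a b : ℝ) :
    HomTree.qpow q a * HomTree.qpow q b = HomTree.qpow q (a + b) := by
  unfold HomTree.qpow
  rw [← Complex.ofReal_mul, ← Real.rpow_add (by exact_mod_cast hq)]

lemma qpow_nat (m : ℕ) : ((q : ℂ)) ^ m = HomTree.qpow q (m : ℝ) := by
  unfold HomTree.qpow
  rw [Real.rpow_natCast]
  push_cast
  rfl

lemma qpow_zero : HomTree.qpow q 0 = 1 := by
  unfold HomTree.qpow
  rw [Real.rpow_zero]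
  norm_num

end Qpow

end StmtAux

open HomTree in
/-- explicit form of the dual Abel transform. -/
theorem stmt6 {q : ℕ} (hq : 2 ≤ q) (T : HomTree q) (o : T.V) (ω : ℤ → T.V)
    (hω : ∀ i j : ℤ, (T.G.dist (ω i) (ω j) : ℤ) = |i - j|) (hω0 : ω 0 = o)
    (H : T.V → ℤ)
    (hH : ∀ x : T.V, ∀ᶠ n : ℕ in Filter.atTop,
      (n : ℤ) - (T.G.dist x (ω (n : ℤ)) : ℤ) = H x)
    (F : ℤ → ℂ) (hF : ∀ k : ℤ, F (-k) = F k) :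
    ((1 / (HomTree.delta q 0 : ℂ)) *
        ∑ x ∈ T.sphere o 0, HomTree.qpow q ((H x : ℝ) / 2) * F (H x) = F 0) ∧
    ∀ n : ℕ, 1 ≤ n →
      (1 / (HomTree.delta q n : ℂ)) *
          ∑ x ∈ T.sphere o n, HomTree.qpow q ((H x : ℝ) / 2) * F (H x) =
        (2 * (q : ℂ) / ((q : ℂ) + 1)) * HomTree.qpow q (-(n : ℝ) / 2) * F n +
        (((q : ℂ) - 1) / ((q : ℂ) + 1)) * HomTree.qpow q (-(n : ℝ) / 2) *
          ∑ k ∈ (Finset.Ioo (-(n : ℤ)) (n : ℤ)).filter (fun k => k % 2 = (n : ℤ) % 2),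
            F k := by
  classical
  have hq0 : 0 < q := by omega
  -- `H o = 0`
  have hHo : H o = 0 := by
    obtain ⟨n, hn⟩ := (hH o).exists
    have hd := hω 0 (n : ℤ)
    rw [hω0] at hd
    simp only [zero_sub, abs_neg] at hd
    rw [abs_of_nonneg (by positivity : (0:ℤ) ≤ (n:ℤ))] at hd
    omega
  constructor
  · rw [StmtAux.sphere_zero, Finset.sum_singleton, hHo]
    simp [HomTree.delta, StmtAux.qpow_zero]
  · intro n hn
    set g : ℤ → ℂ := fun k => HomTree.qpow q ((k : ℝ)/2) * F k with hg
    have hcf : ∑ x ∈ T.sphere o n, HomTree.qpow q ((H x : ℝ) / 2) * F (H x)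
        = g (n : ℤ) + (q : ℂ) ^ n * g (-(n : ℤ))
          + ((q : ℂ) - 1) * ∑ j ∈ Finset.Icc 1 (n - 1),
              (q : ℂ) ^ (j - 1) * g ((n : ℤ) - 2 * (j : ℤ)) :=
      StmtAux.closed_form T o H ω hH hHo n hn g
    rw [hcf]
    -- simplify the sum term
    have hterm : ∀ j ∈ Finset.Icc 1 (n - 1),
        (q : ℂ) ^ (j - 1) * g ((n : ℤ) - 2 * (j : ℤ))
          = HomTree.qpow q ((n : ℝ)/2 - 1) * F ((n : ℤ) - 2 * (j : ℤ)) := by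
      intro j hj
      have hj1 : 1 ≤ j := (Finset.mem_Icc.mp hj).1
      rw [hg]
      simp only []
      rw [← mul_assoc, StmtAux.qpow_nat (q := q) (j - 1), StmtAux.qpow_add hq0]
      congr 2
      have : ((j - 1 : ℕ) : ℝ) = (j : ℝ) - 1 := by
        push_cast [Nat.cast_sub hj1]; ring
      rw [this]
      push_cast
      ring
    rw [Finset.sum_congr rfl hterm, ← Finset.mul_sum]
    -- reindex the sum
    have hreindex : ∑ j ∈ Finset.Icc 1 (n - 1), F ((n : ℤ) - 2 * (j : ℤ))
        = ∑ k ∈ (Finset.Ioo (-(n : ℤ)) (n : ℤ)).filter (fun k => k % 2 = (n : ℤ) % 2), F k := by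
      refine Finset.sum_nbij' (i := fun j => (n : ℤ) - 2 * (j : ℤ))
        (j := fun k => ((n : ℤ) - k).toNat / 2) ?_ ?_ ?_ ?_ ?_
      · intro j hj
        rw [Finset.mem_Icc] at hj
        simp only [Finset.mem_filter, Finset.mem_Ioo]
        omega
      · intro k hk
        simp only [Finset.mem_filter, Finset.mem_Ioo] at hk
        rw [Finset.mem_Icc]
        beta_reduce
        omega
      · intro j hj
        rw [Finset.mem_Icc] at hj
        beta_reduce
        omega
      · intro k hk
        simp only [Finset.mem_filter, Finset.mem_Ioo] at hk
        beta_reduce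
        omega
      · intro j hj
        rfl
    rw [hreindex]
    -- now pure scalar algebra
    have hdel : ((HomTree.delta q n : ℕ) : ℂ) = ((q : ℂ) + 1) * (q : ℂ) ^ (n - 1) := by
      unfold HomTree.delta
      rw [if_neg (by omega : ¬ n = 0)]
      push_cast
      ring
    have hgn : g (n : ℤ) = HomTree.qpow q ((n : ℝ)/2) * F (n : ℤ) := by
      rw [hg]; simp only []; norm_num
    have hgneg : g (-(n : ℤ)) = HomTree.qpow q (-((n : ℝ)/2)) * F (n : ℤ) := by
      rw [hg]; simp only [hF]
      congr 2
      push_cast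
      ring
    rw [hgn, hgneg, hdel]
    have hcast1 : ((n - 1 : ℕ) : ℝ) = (n : ℝ) - 1 := by
      push_cast [Nat.cast_sub hn]; ring
    have e1 : HomTree.qpow q ((n : ℝ)/2) = (q : ℂ) ^ n * HomTree.qpow q (-((n : ℝ))/2) := by
      rw [StmtAux.qpow_nat, StmtAux.qpow_add hq0]
      congr 1
      ring
    have e2 : HomTree.qpow q ((n : ℝ)/2 - 1)
        = (q : ℂ) ^ (n - 1) * HomTree.qpow q (-((n : ℝ))/2) := by
      rw [StmtAux.qpow_nat, StmtAux.qpow_add hq0, hcast1]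
      congr 1
      ring
    have e3 : ((q : ℂ)) ^ n = (q : ℂ) * (q : ℂ) ^ (n - 1) := by
      conv_lhs => rw [show n = (n - 1) + 1 by omega]
      ring
    have hne1 : ((q : ℂ) + 1) ≠ 0 := by
      have e : ((q : ℂ) + 1) = ((q + 1 : ℕ) : ℂ) := by push_cast; ring
      rw [e]
      exact_mod_cast Nat.succ_ne_zero q
    have hne2 : ((q : ℂ)) ^ (n - 1) ≠ 0 := by
      apply pow_ne_zero
      simp only [ne_eq, Nat.cast_eq_zero]
      omega
    have hq2 : -((n : ℝ))/2 = -((n : ℝ)/2) := by ring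
    rw [← hq2] at *
    rw [e1, e2, e3]
    field_simp
    ring
end

section
/- (Inversion of the dual Abel transform.) For an even function F : ℤ → ℂ define G : ℕ → ℂ by G(0) = F(0) and, for n ≥ 1, G(n) = (2q/(q+1))·q^(−n/2)·F(n) + ((q−1)/(q+1))·q^(−n/2)·Σ_{k : −n < k < n, k ≡ n (mod 2)} F(k). Then for every h ∈ ℕ: if h = 0, G(0) = F(0); if h is odd, ((q^(1/2)+q^(−1/2))/2)·q^((h−1)/2)·G(h) − ((q−q^(−1))/2)·q^(−h/2)·Σ_{k odd, 0 < k < h} q^k·G(k) = F(h); and if h ≥ 2 is even, ((q^(1/2)+q^(−1/2))/2)·q^((h−1)/2)·G(h) − ((q^(1/2)−q^(−1/2))/2)·q^(−(h−1)/2)·G(0) − ((q−q^(−1))/2)·q^(−h/2)·Σ_{k even, 0 < k < h} q^k·G(k) = F(h). -/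
open scoped BigOperators

private lemma keyodd' (r u c Gh Fh S T : ℂ) (hr : r ≠ 0) (h0 : c ≠ 0) (hu : u ≠ 0)
    (h1 : c * (r*u) * Gh = 2*(r*r)*Fh + (r*r-1)*S)
    (h2 : c * T = (r*u) * S) :
    ((r+r⁻¹)/2) * u * Gh - ((r*r-(r*r)⁻¹)/2) * (r*u)⁻¹ * T = ((r*r+1)*Fh)/c := by
  have hGh : Gh = (2*(r*r)*Fh + (r*r-1)*S) / (c * (r*u)) := by
    rw [eq_div_iff (mul_ne_zero h0 (mul_ne_zero hr hu))]; linear_combination h1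
  have hT : T = (r*u) * S / c := by
    rw [eq_div_iff h0]; linear_combination h2
  have hD : r*r*2*(r*u)*c ≠ 0 :=
    mul_ne_zero (mul_ne_zero (mul_ne_zero (mul_ne_zero hr hr) two_ne_zero) (mul_ne_zero hr hu)) h0
  have hK : r^5*u^2*c^2*(r⁻¹^5*u⁻¹^2*c⁻¹^2) = 1 := by
    rw [inv_pow, inv_pow, inv_pow]; field_simp
  rw [hGh, hT]
  field_simp
  ring

private lemma keyodd (r u w Gh Fh S T : ℂ) (hr : r ≠ 0) (h0 : r*r+1 ≠ 0)
    (hu : u ≠ 0) (hw : w = r * u)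
    (h1 : (r*r+1) * w * Gh = 2*(r*r)*Fh + (r*r-1)*S)
    (h2 : (r*r+1) * T = w * S) :
    ((r+r⁻¹)/2) * u * Gh - ((r*r-(r*r)⁻¹)/2) * w⁻¹ * T = Fh := by
  subst hw
  rw [keyodd' r u (r*r+1) Gh Fh S T hr h0 hu h1 h2, mul_comm,
    mul_div_assoc, div_self h0, mul_one]

private lemma keyeven' (r u c Gh Fh S T G0 : ℂ) (hr : r ≠ 0) (h0 : c ≠ 0) (hu : u ≠ 0)
    (h1 : c * (r*u) * Gh = 2*(r*r)*Fh + (r*r-1)*S)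
    (h2 : c * T + (r*r) * G0 = (r*u) * S) :
    ((r+r⁻¹)/2) * u * Gh - ((r-r⁻¹)/2) * u⁻¹ * G0
      - ((r*r-(r*r)⁻¹)/2) * (r*u)⁻¹ * T
    = ((r*r+1)*Fh)/c + (((r*r+1) - c) * (r*r-1) * G0) / (2*r*u*c) := by
  have hGh : Gh = (2*(r*r)*Fh + (r*r-1)*S) / (c * (r*u)) := by
    rw [eq_div_iff (mul_ne_zero h0 (mul_ne_zero hr hu))]; linear_combination h1
  have hT : T = ((r*u) * S - (r*r) * G0) / c := by
    rw [eq_div_iff h0]; linear_combination h2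
  have hD : r*r*2*(r*u)*c ≠ 0 :=
    mul_ne_zero (mul_ne_zero (mul_ne_zero (mul_ne_zero hr hr) two_ne_zero) (mul_ne_zero hr hu)) h0
  have hE1 : r*2*(c*(r*u))*(r*2*u) ≠ 0 := by
    apply mul_ne_zero (mul_ne_zero (mul_ne_zero hr two_ne_zero)
      (mul_ne_zero h0 (mul_ne_zero hr hu)))
    exact mul_ne_zero (mul_ne_zero hr two_ne_zero) hu
  have hE2 : c*(2*r*u*c) ≠ 0 :=
    mul_ne_zero h0 (mul_ne_zero (mul_ne_zero (mul_ne_zero two_ne_zero hr) hu) h0)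
  rw [hGh, hT]
  field_simp
  ring

private lemma keyeven (r u w Gh Fh S T G0 : ℂ) (hr : r ≠ 0) (h0 : r*r+1 ≠ 0)
    (hu : u ≠ 0) (hw : w = r * u)
    (h1 : (r*r+1) * w * Gh = 2*(r*r)*Fh + (r*r-1)*S)
    (h2 : (r*r+1) * T + (r*r) * G0 = w * S) :
    ((r+r⁻¹)/2) * u * Gh - ((r-r⁻¹)/2) * u⁻¹ * G0
      - ((r*r-(r*r)⁻¹)/2) * w⁻¹ * T = Fh := by
  subst hw
  rw [keyeven' r u (r*r+1) Gh Fh S T G0 hr h0 hu h1 h2]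
  rw [mul_comm ((r:ℂ)*r+1) Fh, mul_div_assoc, div_self h0, mul_one]
  simp

open HomTree in
/-- inversion of the dual Abel transform. -/
theorem stmt7 (q : ℕ) (hq : 2 ≤ q) (F : ℤ → ℂ) (hF : ∀ k : ℤ, F (-k) = F k)
    (G : ℕ → ℂ) (hG0 : G 0 = F 0)
    (hG : ∀ n : ℕ, 1 ≤ n → G n =
      (2 * (q : ℂ) / ((q : ℂ) + 1)) * HomTree.qpow q (-(n : ℝ) / 2) * F n +
      (((q : ℂ) - 1) / ((q : ℂ) + 1)) * HomTree.qpow q (-(n : ℝ) / 2) *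
        ∑ k ∈ (Finset.Ioo (-(n : ℤ)) (n : ℤ)).filter (fun k => k % 2 = (n : ℤ) % 2), F k) :
    G 0 = F 0 ∧
    (∀ h : ℕ, Odd h →
      ((HomTree.qpow q ((1 : ℝ)/2) + HomTree.qpow q (-(1 : ℝ)/2)) / 2) *
          HomTree.qpow q (((h : ℝ) - 1) / 2) * G h
        - (((q : ℂ) - ((q : ℂ))⁻¹) / 2) * HomTree.qpow q (-(h : ℝ) / 2) *
          ∑ k ∈ (Finset.Ioo 0 h).filter (fun k => Odd k), (q : ℂ) ^ k * G k
      = F (h : ℤ)) ∧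
    (∀ h : ℕ, 2 ≤ h → Even h →
      ((HomTree.qpow q ((1 : ℝ)/2) + HomTree.qpow q (-(1 : ℝ)/2)) / 2) *
          HomTree.qpow q (((h : ℝ) - 1) / 2) * G h
        - ((HomTree.qpow q ((1 : ℝ)/2) - HomTree.qpow q (-(1 : ℝ)/2)) / 2) *
          HomTree.qpow q (-((h : ℝ) - 1) / 2) * G 0
        - (((q : ℂ) - ((q : ℂ))⁻¹) / 2) * HomTree.qpow q (-(h : ℝ) / 2) *
          ∑ k ∈ (Finset.Ioo 0 h).filter (fun k => Even k), (q : ℂ) ^ k * G k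
      = F (h : ℤ)) := by
  have hq0R : (0:ℝ) < q := by exact_mod_cast (by omega : 0 < q)
  have hqC : (q:ℂ) ≠ 0 := Nat.cast_ne_zero.mpr (by omega)
  obtain ⟨r, hrdef⟩ : ∃ r : ℂ, r = ((((q:ℝ) ^ ((1:ℝ)/2)) : ℝ) : ℂ) := ⟨_, rfl⟩
  have hr0 : r ≠ 0 := by
    rw [hrdef]
    exact_mod_cast ne_of_gt (Real.rpow_pos_of_pos hq0R _)
  have hrr : r * r = (q:ℂ) := by
    rw [hrdef, ← Complex.ofReal_mul, ← Real.rpow_add hq0R]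
    norm_num
  have hone : r * r + 1 ≠ 0 := by
    rw [hrr, show ((q:ℕ):ℂ) + 1 = ((q+1 : ℕ):ℂ) by push_cast; ring]
    exact Nat.cast_ne_zero.mpr (by omega)
  have hqpow : ∀ m : ℤ, HomTree.qpow q ((m:ℝ)/2) = r ^ m := by
    intro m
    simp only [HomTree.qpow]
    rw [show ((m:ℝ)/2) = (1:ℝ)/2 * (m:ℝ) by ring,
      Real.rpow_mul hq0R.le, Real.rpow_intCast, Complex.ofReal_zpow, ← hrdef]
  have hqn : ∀ n : ℕ, HomTree.qpow q (-(n:ℝ)/2) = (r ^ n)⁻¹ := by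
    intro n
    rw [show (-(n:ℝ)/2) = (((-(n:ℤ)):ℤ):ℝ)/2 by push_cast; ring, hqpow, zpow_neg,
      zpow_natCast]
  have hqp : ∀ n : ℕ, HomTree.qpow q ((n:ℝ)/2) = r ^ n := by
    intro n
    rw [show ((n:ℝ)/2) = (((n:ℤ)):ℝ)/2 by push_cast; ring, hqpow, zpow_natCast]
  simp only [← hrr] at hG
  simp only [← hrr]
  -- the key lemma A
  have hA : ∀ n : ℕ, 1 ≤ n → (r*r+1) * r ^ n * G n
      = 2*(r*r) * F n + (r*r-1) *
        ∑ k ∈ (Finset.Ioo (-(n : ℤ)) (n : ℤ)).filter (fun k => k % 2 = (n : ℤ) % 2), F k := by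
    intro n hn
    rw [hG n hn, hqn n]
    have hrn : r ^ n ≠ 0 := pow_ne_zero _ hr0
    field_simp
    exact mul_div_cancel_left₀ _ (by rw [sq]; exact hone)
  -- recursion for the F-sums
  have hS : ∀ n : ℕ, 1 ≤ n →
      (∑ k ∈ (Finset.Ioo (-((n+2 : ℕ) : ℤ)) ((n+2 : ℕ) : ℤ)).filter
          (fun k => k % 2 = ((n+2 : ℕ) : ℤ) % 2), F k)
      = (∑ k ∈ (Finset.Ioo (-(n : ℤ)) (n : ℤ)).filter (fun k => k % 2 = (n : ℤ) % 2), F k)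
        + 2 * F n := by
    intro n hn
    have hset : (Finset.Ioo (-((n+2 : ℕ) : ℤ)) ((n+2 : ℕ) : ℤ)).filter
          (fun k => k % 2 = ((n+2 : ℕ) : ℤ) % 2)
        = insert (n : ℤ) (insert (-(n : ℤ))
            ((Finset.Ioo (-(n : ℤ)) (n : ℤ)).filter (fun k => k % 2 = (n : ℤ) % 2))) := by
      ext k
      simp only [Finset.mem_filter, Finset.mem_Ioo, Finset.mem_insert]
      push_cast
      omega
    rw [hset, Finset.sum_insert (by
        simp only [Finset.mem_insert, Finset.mem_filter, Finset.mem_Ioo]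
        push_cast
        omega),
      Finset.sum_insert (by
        simp only [Finset.mem_filter, Finset.mem_Ioo]
        omega)]
    rw [hF]
    ring
  -- splitting the G-sums
  have hTodd : ∀ m : ℕ, (Finset.Ioo 0 ((2*m+1)+2)).filter (fun k => Odd k)
      = insert (2*m+1) ((Finset.Ioo 0 (2*m+1)).filter (fun k => Odd k)) := by
    intro m
    ext k
    simp only [Finset.mem_filter, Finset.mem_Ioo, Finset.mem_insert, Nat.odd_iff]
    omega
  have hTeven : ∀ m : ℕ, (Finset.Ioo 0 ((2*m+2)+2)).filter (fun k => Even k)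
      = insert (2*m+2) ((Finset.Ioo 0 (2*m+2)).filter (fun k => Even k)) := by
    intro m
    ext k
    simp only [Finset.mem_filter, Finset.mem_Ioo, Finset.mem_insert, Nat.even_iff]
    omega
  -- the inductive identities
  have Podd : ∀ m : ℕ, (r*r+1) *
      (∑ k ∈ (Finset.Ioo 0 (2*m+1)).filter (fun k => Odd k), (r*r) ^ k * G k)
      = r ^ (2*m+1) *
        ∑ k ∈ (Finset.Ioo (-((2*m+1 : ℕ) : ℤ)) ((2*m+1 : ℕ) : ℤ)).filter
          (fun k => k % 2 = ((2*m+1 : ℕ) : ℤ) % 2), F k := by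
    intro m
    induction m with
    | zero =>
      have e1 : (Finset.Ioo 0 (2*0+1)).filter (fun k => Odd k) = (∅ : Finset ℕ) := by decide
      have e2 : (Finset.Ioo (-((2*0+1 : ℕ) : ℤ)) ((2*0+1 : ℕ) : ℤ)).filter
          (fun k => k % 2 = ((2*0+1 : ℕ) : ℤ) % 2) = (∅ : Finset ℤ) := by
        ext k
        simp only [Finset.mem_filter, Finset.mem_Ioo, Finset.notMem_empty, iff_false, not_and]
        push_cast
        omega
      rw [e1, e2]
      simp
    | succ m IH =>
      rw [show 2*(m+1)+1 = (2*m+1)+2 by ring]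
      rw [hTodd m, Finset.sum_insert (by simp), hS (2*m+1) (by omega)]
      have h1 := hA (2*m+1) (by omega)
      push_cast at h1 IH ⊢
      linear_combination IH + r^(2*m+1) * h1
  have Peven : ∀ m : ℕ, (r*r+1) *
      (∑ k ∈ (Finset.Ioo 0 (2*m+2)).filter (fun k => Even k), (r*r) ^ k * G k)
      + (r*r) * G 0
      = r ^ (2*m+2) *
        ∑ k ∈ (Finset.Ioo (-((2*m+2 : ℕ) : ℤ)) ((2*m+2 : ℕ) : ℤ)).filter
          (fun k => k % 2 = ((2*m+2 : ℕ) : ℤ) % 2), F k := by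
    intro m
    induction m with
    | zero =>
      have e1 : (Finset.Ioo 0 (2*0+2)).filter (fun k => Even k) = (∅ : Finset ℕ) := by decide
      have e2 : (Finset.Ioo (-((2*0+2 : ℕ) : ℤ)) ((2*0+2 : ℕ) : ℤ)).filter
          (fun k => k % 2 = ((2*0+2 : ℕ) : ℤ) % 2) = ({0} : Finset ℤ) := by
        ext k
        simp only [Finset.mem_filter, Finset.mem_Ioo, Finset.mem_singleton]
        push_cast
        omega
      rw [e1, e2]
      simp only [Finset.sum_empty, Finset.sum_singleton, mul_zero, zero_add, hG0]
      ring
    | succ m IH =>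
      rw [show 2*(m+1)+2 = (2*m+2)+2 by ring]
      rw [hTeven m, Finset.sum_insert (by simp), hS (2*m+2) (by omega)]
      have h1 := hA (2*m+2) (by omega)
      push_cast at h1 IH ⊢
      linear_combination IH + r^(2*m+2) * h1
  refine ⟨hG0, ?_, ?_⟩
  · -- odd case
    intro h hodd
    obtain ⟨m, hm⟩ := hodd
    subst hm
    rw [show ((1:ℝ))/2 = ((1:ℕ):ℝ)/2 by norm_num, hqp 1,
      show (-(1:ℝ)/2) = (-((1:ℕ):ℝ)/2) by norm_num, hqn 1, pow_one,
      show (((2*m+1 : ℕ):ℝ) - 1)/2 = ((2*m : ℕ):ℝ)/2 by push_cast; ring, hqp (2*m),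
      hqn (2*m+1)]
    exact keyodd r (r^(2*m)) (r^(2*m+1)) (G (2*m+1)) (F ((2*m+1 : ℕ) : ℤ)) _ _
      hr0 hone (pow_ne_zero _ hr0) (by ring) (hA (2*m+1) (by omega)) (Podd m)
  · -- even case
    intro h h2le heven
    obtain ⟨m, hm⟩ : ∃ m, h = 2*m+2 := by
      obtain ⟨k, hk⟩ := heven
      exact ⟨k - 1, by omega⟩
    subst hm
    rw [show ((1:ℝ))/2 = ((1:ℕ):ℝ)/2 by norm_num, hqp 1,
      show (-(1:ℝ)/2) = (-((1:ℕ):ℝ)/2) by norm_num, hqn 1, pow_one,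
      show (((2*m+2 : ℕ):ℝ) - 1)/2 = ((2*m+1 : ℕ):ℝ)/2 by push_cast; ring, hqp (2*m+1),
      show (-(((2*m+2 : ℕ):ℝ) - 1)/2) = (-((2*m+1 : ℕ):ℝ)/2) by push_cast; ring,
      hqn (2*m+1), hqn (2*m+2)]
    exact keyeven r (r^(2*m+1)) (r^(2*m+2)) (G (2*m+2)) (F ((2*m+2 : ℕ) : ℤ)) _ _ (G 0)
      hr0 hone (pow_ne_zero _ hr0) (by ring) (hA (2*m+2) (by omega)) (Peven m)
end

section
/- (Inversion of the Abel transform.) Let F : ℕ → ℂ satisfy sup_{n ≥ 1} n^k·q^(n/2)·|F(n)| < ∞ for every k ∈ ℕ. Define G : ℤ → ℂ by G(h) = Σ_{k=0}^{∞} q^(|h|/2 + k)·(F(|h|+2k) − F(|h|+2k+2)) (the series converges absolutely). Then for every n ∈ ℕ the series Σ_{k=0}^{∞} q^(−n/2 − k)·(G(n+2k) − G(n+2k+2)) converges absolutely and equals F(n). -/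
open scoped BigOperators

open HomTree in
/-- The Abel transform `G = A F` of a radial function on the tree. -/
noncomputable def abelG (q : ℕ) (F : ℕ → ℂ) (h : ℤ) : ℂ :=
  ∑' k : ℕ, HomTree.qpow q ((h.natAbs : ℝ) / 2 + (k : ℝ)) *
    (F (h.natAbs + 2 * k) - F (h.natAbs + 2 * k + 2))


private lemma qpow_mul' (q : ℕ) (hq0 : (0:ℝ) < q) (x y : ℝ) :
    HomTree.qpow q x * HomTree.qpow q y = HomTree.qpow q (x + y) := by
  simp only [HomTree.qpow, ← Complex.ofReal_mul, ← Real.rpow_add hq0]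

private lemma qpow_one' (q : ℕ) : HomTree.qpow q 1 = (q:ℂ) := by
  simp [HomTree.qpow, Real.rpow_one]

private lemma qpow_zero' (q : ℕ) : HomTree.qpow q 0 = 1 := by
  simp [HomTree.qpow, Real.rpow_zero]

private noncomputable def cc (q : ℕ) (F : ℕ → ℂ) (n m : ℕ) : ℂ :=
  HomTree.qpow q ((n:ℝ)/2 + m) * F (n + 2*m)

private lemma cc_norm (q : ℕ) (hq0 : (0:ℝ) < q) (F : ℕ → ℂ) (n m : ℕ) :
    ‖cc q F n m‖
      = (q:ℝ) ^ (((n + 2*m : ℕ):ℝ)/2) * ‖F (n + 2*m)‖ := by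
  have h : ((n + 2*m : ℕ):ℝ)/2 = (n:ℝ)/2 + m := by push_cast; ring
  rw [cc, norm_mul, h, HomTree.qpow, Complex.norm_real, Real.norm_eq_abs,
    abs_of_pos (Real.rpow_pos_of_pos hq0 _)]

private lemma cc_shift (q : ℕ) (F : ℕ → ℂ) (n k j : ℕ) :
    cc q F (n + 2*k) j = cc q F n (k + j) := by
  unfold cc
  have h1 : ((n + 2*k : ℕ):ℝ)/2 + (j:ℝ) = (n:ℝ)/2 + ((k + j : ℕ):ℝ) := by push_cast; ring
  have h2 : n + 2*k + 2*j = n + 2*(k+j) := by omega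
  rw [h1, h2]


private lemma summable_cc (q : ℕ) (hq0 : (0:ℝ) < q) (F : ℕ → ℂ) {C : ℝ}
    (hC : ∀ m : ℕ, 1 ≤ m → (m:ℝ)^2 * (q:ℝ) ^ ((m:ℝ)/2) * ‖F m‖ ≤ C)
    (n : ℕ) : Summable (cc q F n) := by
  rw [← summable_nat_add_iff 1]
  apply Summable.of_norm_bounded (g := fun m : ℕ => C * (1/((m:ℝ)+1)^2))
  · apply Summable.mul_left
    have h := (summable_nat_add_iff (f := fun m : ℕ => 1/(m:ℝ)^2) 1).mpr
      (Real.summable_one_div_nat_pow.mpr one_lt_two)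
    exact h.congr (fun m => by push_cast; ring)
  · intro m
    have hm1 : 1 ≤ n + 2*(m+1) := by omega
    have h1 := hC (n + 2*(m+1)) hm1
    rw [cc_norm q hq0]
    set x := (q:ℝ) ^ (((n + 2*(m+1) : ℕ):ℝ)/2) with hx
    have hx0 : 0 ≤ x := (Real.rpow_pos_of_pos hq0 _).le
    have hy0 : 0 ≤ ‖F (n + 2*(m+1))‖ := norm_nonneg (F (n + 2*(m+1)))
    have hMr : ((m:ℝ)+1) ≤ ((n + 2*(m+1) : ℕ):ℝ) := by
      push_cast
      have : (0:ℝ) ≤ (n:ℝ) := Nat.cast_nonneg n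
      linarith [(Nat.cast_nonneg m : (0:ℝ) ≤ (m:ℝ))]
    have hm0 : (0:ℝ) ≤ (m:ℝ)+1 := by positivity
    rw [mul_one_div, le_div_iff₀ (by positivity)]
    have key : (((m:ℝ)+1))^2 * (x * ‖F (n + 2*(m+1))‖)
        ≤ (((n + 2*(m+1) : ℕ):ℝ))^2 * (x * ‖F (n + 2*(m+1))‖) := by
      apply mul_le_mul_of_nonneg_right _ (mul_nonneg hx0 hy0)
      exact pow_le_pow_left₀ hm0 hMr 2
    nlinarith [key, h1]

private lemma summand_eq (q : ℕ) (hq0 : (0:ℝ) < q) (F : ℕ → ℂ) (N j : ℕ) :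
    HomTree.qpow q ((N:ℝ)/2 + (j:ℝ)) * (F (N + 2*j) - F (N + 2*j + 2))
      = cc q F N j - (q:ℂ)⁻¹ * cc q F N (j+1) := by
  have hqC : (q:ℂ) ≠ 0 := by
    simp only [ne_eq, Nat.cast_eq_zero]
    rintro rfl
    exact lt_irrefl 0 (by exact_mod_cast hq0)
  have e1 : ((N:ℝ)/2 + (((j+1:ℕ)):ℝ)) = ((N:ℝ)/2 + (j:ℝ)) + 1 := by push_cast; ring
  have e2 : N + 2*(j+1) = N + 2*j + 2 := by omega
  have h : HomTree.qpow q ((N:ℝ)/2 + (j:ℝ) + 1) = HomTree.qpow q ((N:ℝ)/2 + (j:ℝ)) * (q:ℂ) := by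
    rw [← qpow_one' q, qpow_mul' q hq0]
  unfold cc
  rw [e1, e2, h]
  field_simp

private lemma qpow_cancel0 (q : ℕ) (hq0 : (0:ℝ) < q) (x : ℝ) :
    HomTree.qpow q (-x) * HomTree.qpow q x = 1 := by
  rw [qpow_mul' q hq0, neg_add_cancel, qpow_zero']

private lemma qpow_cancel1 (q : ℕ) (hq0 : (0:ℝ) < q) (x : ℝ) :
    HomTree.qpow q (-x) * ((q:ℂ)⁻¹ * HomTree.qpow q (x + 1)) = 1 := by
  have hqC : (q:ℂ) ≠ 0 := by
    simp only [ne_eq, Nat.cast_eq_zero]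
    rintro rfl
    exact lt_irrefl 0 (by exact_mod_cast hq0)
  have h1 : HomTree.qpow q (-x) * HomTree.qpow q (x+1) = (q:ℂ) := by
    rw [qpow_mul' q hq0]
    rw [show -x + (x+1) = 1 by ring, qpow_one']
  calc HomTree.qpow q (-x) * ((q:ℂ)⁻¹ * HomTree.qpow q (x+1))
      = (q:ℂ)⁻¹ * (HomTree.qpow q (-x) * HomTree.qpow q (x+1)) := by ring
    _ = 1 := by rw [h1]; exact inv_mul_cancel₀ hqC


private lemma summable_summand (q : ℕ) (hq0 : (0:ℝ) < q) (F : ℕ → ℂ) {C : ℝ}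
    (hC : ∀ m : ℕ, 1 ≤ m → (m:ℝ)^2 * (q:ℝ) ^ ((m:ℝ)/2) * ‖F m‖ ≤ C)
    (n : ℕ) : Summable (fun j : ℕ => cc q F n j - (q:ℂ)⁻¹ * cc q F n (j+1)) :=
  (summable_cc q hq0 F hC n).sub
    (((summable_nat_add_iff 1).mpr (summable_cc q hq0 F hC n)).mul_left _)

private lemma abelG_eq (q : ℕ) (hq0 : (0:ℝ) < q) (F : ℕ → ℂ) {C : ℝ}
    (hC : ∀ m : ℕ, 1 ≤ m → (m:ℝ)^2 * (q:ℝ) ^ ((m:ℝ)/2) * ‖F m‖ ≤ C)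
    (N : ℕ) :
    abelG q F (N:ℤ) = (∑' j : ℕ, cc q F N j) - (q:ℂ)⁻¹ * ∑' j : ℕ, cc q F N (j+1) := by
  have hs := summable_cc q hq0 F hC N
  have hs1 : Summable (fun j : ℕ => cc q F N (j+1)) := (summable_nat_add_iff 1).mpr hs
  unfold abelG
  simp only [Int.natAbs_natCast]
  rw [tsum_congr (fun j => summand_eq q hq0 F N j),
    Summable.tsum_sub hs (hs1.mul_left _), tsum_mul_left]

private lemma abelG_diff (q : ℕ) (hq0 : (0:ℝ) < q) (F : ℕ → ℂ) {C : ℝ}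
    (hC : ∀ m : ℕ, 1 ≤ m → (m:ℝ)^2 * (q:ℝ) ^ ((m:ℝ)/2) * ‖F m‖ ≤ C)
    (n k : ℕ) :
    abelG q F ((n : ℤ) + 2 * k) - abelG q F ((n : ℤ) + 2 * k + 2)
      = cc q F n k - (q:ℂ)⁻¹ * cc q F n (k+1) := by
  have hs := summable_cc q hq0 F hC
  have htail : ∀ m : ℕ, Summable (fun j : ℕ => cc q F n (m + j)) :=
    fun m => ((summable_nat_add_iff m).mpr (hs n)).congr (fun j => by rw [Nat.add_comm])
  have e1 : ((n:ℤ) + 2 * (k:ℕ)) = ((n + 2*k : ℕ) : ℤ) := by push_cast; ring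
  have e2 : ((n:ℤ) + 2 * (k:ℕ) + 2) = ((n + 2*(k+1) : ℕ) : ℤ) := by push_cast; ring
  rw [e2, e1, abelG_eq q hq0 F hC, abelG_eq q hq0 F hC]
  have t1 : (∑' j : ℕ, cc q F (n + 2*k) j) = ∑' j : ℕ, cc q F n (k + j) :=
    tsum_congr (fun j => cc_shift q F n k j)
  have t2 : (∑' j : ℕ, cc q F (n + 2*k) (j+1)) = ∑' j : ℕ, cc q F n ((k+1) + j) :=
    tsum_congr (fun j => by rw [cc_shift]; congr 1; omega)
  have t3 : (∑' j : ℕ, cc q F (n + 2*(k+1)) j) = ∑' j : ℕ, cc q F n ((k+1) + j) :=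
    tsum_congr (fun j => cc_shift q F n (k+1) j)
  have t4 : (∑' j : ℕ, cc q F (n + 2*(k+1)) (j+1)) = ∑' j : ℕ, cc q F n ((k+2) + j) :=
    tsum_congr (fun j => by rw [cc_shift]; congr 1; omega)
  rw [t1, t2, t3, t4]
  have hA : (∑' j : ℕ, cc q F n (k + j)) = cc q F n k + ∑' j : ℕ, cc q F n ((k+1) + j) := by
    rw [Summable.tsum_eq_zero_add (htail k)]
    congr 1
    exact tsum_congr (fun j => by
      show cc q F n (k + (j+1)) = cc q F n ((k+1) + j)
      congr 1; omega)
  have hB : (∑' j : ℕ, cc q F n ((k+1) + j))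
      = cc q F n (k+1) + ∑' j : ℕ, cc q F n ((k+2) + j) := by
    rw [Summable.tsum_eq_zero_add (htail (k+1))]
    congr 1
    exact tsum_congr (fun j => by
      show cc q F n ((k+1) + (j+1)) = cc q F n ((k+2) + j)
      congr 1; omega)
  linear_combination hA - (q:ℂ)⁻¹ * hB

private lemma summable_F (q : ℕ) (hq1 : (1:ℝ) < q) (F : ℕ → ℂ) {C : ℝ}
    (hC0 : ∀ m : ℕ, 1 ≤ m → (q:ℝ) ^ ((m:ℝ)/2) * ‖F m‖ ≤ C) (n : ℕ) :
    Summable (fun k : ℕ => F (n + 2*k)) := by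
  rw [← summable_nat_add_iff 1]
  apply Summable.of_norm_bounded (g := fun k : ℕ => C * ((q:ℝ)⁻¹)^k)
  · refine (summable_geometric_of_lt_one (by positivity) ?_).mul_left C
    exact inv_lt_one_of_one_lt₀ hq1
  · intro k
    have h1 := hC0 (n + 2*(k+1)) (by omega)
    have h2 : (q:ℝ)^(k:ℕ) ≤ (q:ℝ)^(((n + 2*(k+1) : ℕ):ℝ)/2) := by
      rw [← Real.rpow_natCast (q:ℝ) k]
      apply Real.rpow_le_rpow_of_exponent_le hq1.le
      push_cast
      linarith [(Nat.cast_nonneg n : (0:ℝ) ≤ (n:ℝ))]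
    have hk0 : (0:ℝ) < (q:ℝ)^(k:ℕ) := by positivity
    rw [inv_pow, ← div_eq_mul_inv, le_div_iff₀ hk0]
    calc ‖F (n+2*(k+1))‖ * (q:ℝ)^(k:ℕ)
        ≤ ‖F (n+2*(k+1))‖ * (q:ℝ)^(((n+2*(k+1):ℕ):ℝ)/2) :=
          mul_le_mul_of_nonneg_left h2 (norm_nonneg (F (n+2*(k+1))))
      _ ≤ C := by rw [mul_comm]; exact h1

open HomTree in
/-- inversion of the Abel transform. -/
theorem stmt8 (q : ℕ) (hq : 2 ≤ q) (F : ℕ → ℂ)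
    (hF : ∀ k : ℕ, ∃ C : ℝ, ∀ n : ℕ, 1 ≤ n →
      (n : ℝ) ^ k * (q : ℝ) ^ ((n : ℝ) / 2) * ‖F n‖ ≤ C) :
    (∀ h : ℤ, Summable (fun k : ℕ =>
      HomTree.qpow q ((h.natAbs : ℝ) / 2 + (k : ℝ)) *
        (F (h.natAbs + 2 * k) - F (h.natAbs + 2 * k + 2)))) ∧
    ∀ n : ℕ,
      Summable (fun k : ℕ =>
        HomTree.qpow q (-(n : ℝ) / 2 - (k : ℝ)) *
          (abelG q F ((n : ℤ) + 2 * k) - abelG q F ((n : ℤ) + 2 * k + 2))) ∧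
      ∑' k : ℕ, HomTree.qpow q (-(n : ℝ) / 2 - (k : ℝ)) *
          (abelG q F ((n : ℤ) + 2 * k) - abelG q F ((n : ℤ) + 2 * k + 2)) = F n := by
  have hqn : 0 < q := by omega
  have hq0 : (0:ℝ) < q := by exact_mod_cast hqn
  have hq1 : (1:ℝ) < q := by exact_mod_cast (by omega : 1 < q)
  obtain ⟨C₂, hC₂⟩ := hF 2
  obtain ⟨C₀, hC₀'⟩ := hF 0
  have hC₀ : ∀ m : ℕ, 1 ≤ m → (q:ℝ) ^ ((m:ℝ)/2) * ‖F m‖ ≤ C₀ := by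
    intro m hm
    have := hC₀' m hm
    simpa using this
  constructor
  · intro h
    exact (summable_summand q hq0 F hC₂ h.natAbs).congr
      (fun j => (summand_eq q hq0 F h.natAbs j).symm)
  · intro n
    have hfinal : ∀ k : ℕ,
        HomTree.qpow q (-(n : ℝ) / 2 - (k : ℝ)) *
          (abelG q F ((n : ℤ) + 2 * k) - abelG q F ((n : ℤ) + 2 * k + 2))
          = F (n + 2*k) - F (n + 2*k + 2) := by
      intro k
      rw [abelG_diff q hq0 F hC₂ n k]
      have h1 : HomTree.qpow q (-((n:ℝ)/2 + (k:ℝ))) * cc q F n k = F (n + 2*k) := by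
        unfold cc
        rw [← mul_assoc, qpow_cancel0 q hq0, one_mul]
      have h2 : HomTree.qpow q (-((n:ℝ)/2 + (k:ℝ))) * ((q:ℂ)⁻¹ * cc q F n (k+1))
          = F (n + 2*k + 2) := by
        unfold cc
        rw [show ((n:ℝ)/2 + (((k+1):ℕ):ℝ)) = ((n:ℝ)/2 + (k:ℝ)) + 1 by push_cast; ring]
        rw [show n + 2*(k+1) = n + 2*k + 2 by omega]
        calc HomTree.qpow q (-((n:ℝ)/2 + (k:ℝ))) *
              ((q:ℂ)⁻¹ * (HomTree.qpow q (((n:ℝ)/2 + (k:ℝ)) + 1) * F (n + 2*k + 2)))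
            = (HomTree.qpow q (-((n:ℝ)/2 + (k:ℝ))) *
                ((q:ℂ)⁻¹ * HomTree.qpow q (((n:ℝ)/2 + (k:ℝ)) + 1))) * F (n + 2*k + 2) := by
              ring
          _ = F (n + 2*k + 2) := by rw [qpow_cancel1 q hq0, one_mul]
      rw [show (-(n : ℝ) / 2 - (k : ℝ)) = -((n:ℝ)/2 + (k:ℝ)) by ring, mul_sub, h1, h2]
    have hFs := summable_F q hq1 F hC₀ n
    have hFs1 : Summable (fun k : ℕ => F (n + 2*k + 2)) :=
      ((summable_nat_add_iff 1).mpr hFs).congr (fun k => by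
        show F (n + 2*(k+1)) = F (n + 2*k + 2)
        rfl)
    refine ⟨(hFs.sub hFs1).congr (fun k => (hfinal k).symm), ?_⟩
    rw [tsum_congr hfinal, Summable.tsum_sub hFs hFs1]
    have h0 := Summable.tsum_eq_zero_add hFs
    have e : (∑' k : ℕ, F (n + 2*k + 2)) = ∑' k : ℕ, F (n + 2*(k+1)) :=
      tsum_congr (fun k => by rfl)
    rw [e, h0]
    simp
end

section
/- Let u solve the Cauchy problem for the shifted wave equation on T_q with data f, g : T_q → ℂ supported in the ball B(x_0,N) = {y : d(y,x_0) ≤ N}. Then there exists a constant C ≥ 0 such that |u(x,n)| ≤ C·q^(−|n|/2) for all x ∈ T_q and n ∈ ℤ. -/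
open scoped BigOperators

namespace WaveAux

open SimpleGraph

section Geo
variable {V : Type} [DecidableEq V] {G : SimpleGraph V}

lemma cons_geo_path {x z y : V} (hadj : G.Adj x z) (w : G.Walk z y)
    (hwp : w.IsPath) (hlen : w.length ≤ G.dist x y) : (SimpleGraph.Walk.cons hadj w).IsPath := by
  rw [Walk.cons_isPath_iff]
  refine ⟨hwp, fun hx => ?_⟩
  have h1 : 1 ≤ (w.takeUntil x hx).length := by
    have h := SimpleGraph.dist_le (w.takeUntil x hx)
    rwa [SimpleGraph.dist_eq_one_iff_adj.mpr hadj.symm] at h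
  have h2 : G.dist x y ≤ (w.dropUntil x hx).length := SimpleGraph.dist_le _
  have h3 : (w.takeUntil x hx).length + (w.dropUntil x hx).length = w.length := by
    rw [← Walk.length_append, w.take_spec hx]
  omega

lemma tree_dist_ne {x z y : V} (hac : G.IsAcyclic) (hconn : G.Connected)
    (hadj : G.Adj x z) : G.dist x y ≠ G.dist z y := by
  intro he
  obtain ⟨w, hwp, hwl⟩ := hconn.exists_path_of_dist z y
  obtain ⟨p, hpp, hpl⟩ := hconn.exists_path_of_dist x y
  have hcons : (Walk.cons hadj w).IsPath := cons_geo_path hadj w hwp (by omega)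
  have := SimpleGraph.isAcyclic_iff_path_unique.mp hac ⟨Walk.cons hadj w, hcons⟩ ⟨p, hpp⟩
  have hl := congrArg (fun (P : G.Path x y) => P.val.length) this
  simp only [Walk.length_cons] at hl
  omega

lemma tree_unique_step {x z z' y : V} (hac : G.IsAcyclic) (hconn : G.Connected)
    (hadj : G.Adj x z) (hadj' : G.Adj x z')
    (hz : G.dist z y + 1 = G.dist x y) (hz' : G.dist z' y + 1 = G.dist x y) : z = z' := by
  obtain ⟨w, hwp, hwl⟩ := hconn.exists_path_of_dist z y
  obtain ⟨w', hwp', hwl'⟩ := hconn.exists_path_of_dist z' y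
  have hc : (Walk.cons hadj w).IsPath := cons_geo_path hadj w hwp (by omega)
  have hc' : (Walk.cons hadj' w').IsPath := cons_geo_path hadj' w' hwp' (by omega)
  have heq := SimpleGraph.isAcyclic_iff_path_unique.mp hac
    ⟨Walk.cons hadj w, hc⟩ ⟨Walk.cons hadj' w', hc'⟩
  have h1 := congrArg (fun (P : G.Path x y) => P.val.getVert 1) heq
  simpa [Walk.getVert_cons] using h1

lemma tree_exists_step {x y : V} (hconn : G.Connected) (hne : x ≠ y) :
    ∃ z, G.Adj x z ∧ G.dist z y + 1 = G.dist x y := by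
  obtain ⟨p, hpp, hpl⟩ := hconn.exists_path_of_dist x y
  have hd : 0 < G.dist x y := hconn.pos_dist_of_ne hne
  cases p with
  | nil => simp at hd
  | @cons _ z _ hadj w =>
    refine ⟨z, hadj, ?_⟩
    have h1 : G.dist z y ≤ w.length := SimpleGraph.dist_le w
    have h2 : G.dist x y ≤ G.dist x z + G.dist z y := hconn.dist_triangle
    rw [SimpleGraph.dist_eq_one_iff_adj.mpr hadj] at h2
    simp only [Walk.length_cons] at hpl
    omega

end Geo

open HomTree

variable {q : ℕ}

noncomputable def kern (q : ℕ) (n : ℤ) (d : ℕ) : ℂ :=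
  if 0 ≤ n ∧ d ≤ n.toNat ∧ (n.toNat - d) % 2 = 0 then 1 else 0

lemma mem_sphere_one {T : HomTree q} {x z : T.V} : z ∈ T.sphere x 1 ↔ T.G.Adj x z := by
  simp [HomTree.sphere, Set.Finite.mem_toFinset, SimpleGraph.dist_eq_one_iff_adj]

lemma card_sphere_one (T : HomTree q) (x : T.V) : (T.sphere x 1).card = q + 1 := by
  have h : T.sphere x 1 = (T.nbrFin x).toFinset := by
    ext z
    simp [mem_sphere_one, Set.Finite.mem_toFinset]
  rw [h, T.degree]

lemma mem_ball {T : HomTree q} {x y : T.V} {m : ℕ} : y ∈ T.ball x m ↔ T.G.dist x y ≤ m := by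
  simp [HomTree.ball, Set.Finite.mem_toFinset]

lemma sum_sphere_one_of_ne {T : HomTree q} {x y : T.V} (hne : x ≠ y) (F : ℕ → ℂ) :
    ∑ z ∈ T.sphere x 1, F (T.G.dist z y)
      = F (T.G.dist x y - 1) + q * F (T.G.dist x y + 1) := by
  classical
  obtain ⟨z₀, hadj₀, hz₀⟩ := tree_exists_step T.conn hne
  have hz₀mem : z₀ ∈ T.sphere x 1 := mem_sphere_one.mpr hadj₀
  rw [← Finset.add_sum_erase _ _ hz₀mem]
  have hd0 : T.G.dist z₀ y = T.G.dist x y - 1 := by omega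
  rw [hd0]
  congr 1
  have hcongr : ∀ z ∈ (T.sphere x 1).erase z₀,
      F (T.G.dist z y) = F (T.G.dist x y + 1) := by
    intro z hz
    obtain ⟨hzne, hzmem⟩ := Finset.mem_erase.mp hz
    have hadj : T.G.Adj x z := mem_sphere_one.mp hzmem
    have h1 : T.G.dist x y ≠ T.G.dist z y := tree_dist_ne T.acyclic T.conn hadj
    have h2 : T.G.dist z y + 1 ≠ T.G.dist x y := fun h =>
      hzne (tree_unique_step T.acyclic T.conn hadj hadj₀ h hz₀)
    have h3 : T.G.dist z y ≤ T.G.dist z x + T.G.dist x y := T.conn.dist_triangle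
    have h4 : T.G.dist x y ≤ T.G.dist x z + T.G.dist z y := T.conn.dist_triangle
    have h5 : T.G.dist z x = 1 := SimpleGraph.dist_eq_one_iff_adj.mpr hadj.symm
    have h6 : T.G.dist x z = 1 := SimpleGraph.dist_eq_one_iff_adj.mpr hadj
    have h7 : T.G.dist z y = T.G.dist x y + 1 := by omega
    rw [h7]
  rw [Finset.sum_congr rfl hcongr, Finset.sum_const, Finset.card_erase_of_mem hz₀mem,
    card_sphere_one]
  simp [nsmul_eq_mul]

lemma kern_sum (T : HomTree q) (x y : T.V) {n : ℤ} (hn : 0 ≤ n) :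
    ∑ z ∈ T.sphere x 1, kern q n (T.G.dist z y)
      = kern q (n+1) (T.G.dist x y) + q * kern q (n-1) (T.G.dist x y) := by
  by_cases hxy : x = y
  · subst hxy
    have hall : ∀ z ∈ T.sphere x 1, kern q n (T.G.dist z x) = kern q n 1 := by
      intro z hz
      rw [SimpleGraph.dist_comm, SimpleGraph.dist_eq_one_iff_adj.mpr (mem_sphere_one.mp hz)]
    rw [Finset.sum_congr rfl hall, Finset.sum_const, card_sphere_one]
    have hd : T.G.dist x x = 0 := by simp
    rw [hd]
    simp only [nsmul_eq_mul, kern]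
    split_ifs <;> first | (exfalso; omega) | (push_cast; ring)
  · rw [sum_sphere_one_of_ne hxy]
    have hd : 1 ≤ T.G.dist x y := T.conn.pos_dist_of_ne hxy
    simp only [kern]
    split_ifs <;> first | (exfalso; omega) | (push_cast; ring)

noncomputable def myA (T : HomTree q) (h : T.V → ℂ) (n : ℤ) (x : T.V) : ℂ :=
  if 0 ≤ n then
    ∑ y ∈ (T.ball x n.toNat).filter (fun y => (n.toNat - T.G.dist x y) % 2 = 0), h y
  else 0

lemma myA_eq_sum {T : HomTree q} (h : T.V → ℂ) (n : ℤ) (x : T.V) (U : Finset T.V)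
    (hU : ∀ y, T.G.dist x y ≤ n.toNat → y ∈ U) :
    myA T h n x = ∑ y ∈ U, kern q n (T.G.dist x y) * h y := by
  classical
  by_cases hn : 0 ≤ n
  · have hset : (T.ball x n.toNat).filter (fun y => (n.toNat - T.G.dist x y) % 2 = 0)
        = U.filter (fun y => T.G.dist x y ≤ n.toNat ∧ (n.toNat - T.G.dist x y) % 2 = 0) := by
      ext y
      simp only [Finset.mem_filter, mem_ball]
      constructor
      · rintro ⟨h1, h2⟩; exact ⟨hU y h1, h1, h2⟩
      · rintro ⟨_, h1, h2⟩; exact ⟨h1, h2⟩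
    rw [myA, if_pos hn, hset, Finset.sum_filter]
    refine Finset.sum_congr rfl fun y _ => ?_
    rw [kern]
    by_cases hc : T.G.dist x y ≤ n.toNat ∧ (n.toNat - T.G.dist x y) % 2 = 0
    · rw [if_pos hc, if_pos ⟨hn, hc⟩, one_mul]
    · rw [if_neg hc, if_neg (fun hh => hc ⟨hh.2.1, hh.2.2⟩), zero_mul]
  · rw [myA, if_neg hn]
    symm
    refine Finset.sum_eq_zero fun y _ => ?_
    rw [kern, if_neg (fun hh => hn hh.1), zero_mul]

lemma myA_rec (T : HomTree q) (h : T.V → ℂ) {n : ℤ} (hn : 0 ≤ n) (x : T.V) :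
    ∑ z ∈ T.sphere x 1, myA T h n z = myA T h (n+1) x + q * myA T h (n-1) x := by
  classical
  set U : Finset T.V := T.ball x (n.toNat + 1) with hUdef
  have hstep : ∀ z ∈ T.sphere x 1, myA T h n z = ∑ y ∈ U, kern q n (T.G.dist z y) * h y := by
    intro z hz
    refine myA_eq_sum h n z U (fun y hy => ?_)
    have hadj := mem_sphere_one.mp hz
    have h1 : T.G.dist x y ≤ T.G.dist x z + T.G.dist z y := T.conn.dist_triangle
    rw [SimpleGraph.dist_eq_one_iff_adj.mpr hadj] at h1
    rw [hUdef, mem_ball]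
    omega
  rw [Finset.sum_congr rfl hstep, Finset.sum_comm]
  have hker : ∀ y ∈ U, ∑ z ∈ T.sphere x 1, kern q n (T.G.dist z y) * h y
      = kern q (n+1) (T.G.dist x y) * h y + q * (kern q (n-1) (T.G.dist x y) * h y) := by
    intro y _
    rw [← Finset.sum_mul, kern_sum T x y hn]
    ring
  rw [Finset.sum_congr rfl hker, Finset.sum_add_distrib, ← Finset.mul_sum,
    myA_eq_sum h (n+1) x U (fun y hy => by rw [hUdef, mem_ball]; omega),
    myA_eq_sum h (n-1) x U (fun y hy => by rw [hUdef, mem_ball]; omega)]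

lemma myA_zero (T : HomTree q) (h : T.V → ℂ) (x : T.V) : myA T h 0 x = h x := by
  classical
  rw [myA, if_pos le_rfl]
  have hset : (T.ball x (0:ℤ).toNat).filter
      (fun y => ((0:ℤ).toNat - T.G.dist x y) % 2 = 0) = {x} := by
    ext y
    simp only [Finset.mem_filter, mem_ball, Finset.mem_singleton, Int.toNat_zero, Nat.le_zero]
    constructor
    · rintro ⟨h1, _⟩
      exact ((T.conn.dist_eq_zero_iff).mp h1).symm
    · rintro rfl
      simp
  rw [hset, Finset.sum_singleton]

lemma myA_one (T : HomTree q) (h : T.V → ℂ) (x : T.V) :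
    myA T h 1 x = ∑ z ∈ T.sphere x 1, h z := by
  classical
  rw [myA, if_pos (by norm_num)]
  congr 1
  ext z
  simp only [Finset.mem_filter, mem_ball, HomTree.sphere, Set.Finite.mem_toFinset,
    Set.mem_setOf_eq, Int.toNat_one]
  omega

lemma myA_neg (T : HomTree q) (h : T.V → ℂ) {n : ℤ} (hn : n < 0) (x : T.V) :
    myA T h n x = 0 := by
  rw [myA, if_neg (by omega)]

lemma myA_bound (T : HomTree q) {h : T.V → ℂ} {x₀ : T.V} {N : ℕ}
    (hs : ∀ y, N < T.G.dist y x₀ → h y = 0) (n : ℤ) (x : T.V) :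
    ‖myA T h n x‖ ≤ ∑ y ∈ T.ball x₀ N, ‖h y‖ := by
  classical
  have hnn : (0:ℝ) ≤ ∑ y ∈ T.ball x₀ N, ‖h y‖ :=
    Finset.sum_nonneg fun y _ => norm_nonneg _
  rw [myA]
  split_ifs with hn
  · set s := (T.ball x n.toNat).filter (fun y => (n.toNat - T.G.dist x y) % 2 = 0) with hsdef
    calc ‖∑ y ∈ s, h y‖ ≤ ∑ y ∈ s, ‖h y‖ :=
          norm_sum_le _ _
    _ = ∑ y ∈ s ∩ T.ball x₀ N, ‖h y‖ := by
        refine (Finset.sum_subset Finset.inter_subset_left fun y hy hny => ?_).symm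
        have hnb : ¬ T.G.dist x₀ y ≤ N := fun hle =>
          hny (Finset.mem_inter.mpr ⟨hy, mem_ball.mpr hle⟩)
        rw [SimpleGraph.dist_comm] at hnb
        rw [hs y (by omega)]
        simp
    _ ≤ ∑ y ∈ T.ball x₀ N, ‖h y‖ :=
        Finset.sum_le_sum_of_subset_of_nonneg Finset.inter_subset_right
          (fun y _ _ => norm_nonneg _)
  · simpa using hnn

lemma abs_le_ballsum (T : HomTree q) {h : T.V → ℂ} {x₀ : T.V} {N : ℕ}
    (hs : ∀ y, N < T.G.dist y x₀ → h y = 0) (x : T.V) :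
    ‖h x‖ ≤ ∑ y ∈ T.ball x₀ N, ‖h y‖ := by
  classical
  by_cases hx : T.G.dist x₀ x ≤ N
  · exact Finset.single_le_sum (fun y _ => norm_nonneg (h y))
      (mem_ball.mpr hx)
  · rw [hs x (by rw [SimpleGraph.dist_comm] at hx; omega)]
    simpa using Finset.sum_nonneg fun y _ => norm_nonneg (h y)

lemma qpow_add (hq : 0 < q) (a b : ℝ) : qpow q a * qpow q b = qpow q (a+b) := by
  rw [qpow, qpow, qpow, ← Complex.ofReal_mul,
    ← Real.rpow_add (by exact_mod_cast hq : (0:ℝ) < q)]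

lemma qpow_zero : qpow (q := q) 0 = 1 := by
  rw [qpow]; norm_num

lemma abs_qpow (a : ℝ) : ‖qpow q a‖ = (q:ℝ) ^ a := by
  rw [qpow, Complex.norm_real, Real.norm_eq_abs, abs_of_nonneg (Real.rpow_nonneg (by positivity) _)]

lemma qpow_ne_zero (hq : 0 < q) (a : ℝ) : qpow q a ≠ 0 := by
  rw [qpow]
  exact_mod_cast (Real.rpow_pos_of_pos (by exact_mod_cast hq : (0:ℝ) < q) a).ne'

lemma qpow_int_half (j : ℤ) : qpow q ((j:ℝ)/2) = (qpow q ((1:ℝ)/2))^j := by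
  rw [qpow, qpow, ← Complex.ofReal_zpow, ← Real.rpow_intCast ((q:ℝ) ^ ((1:ℝ)/2)) j,
    ← Real.rpow_mul (by positivity)]
  congr 2
  ring

noncomputable def Wz (T : HomTree q) (f g : T.V → ℂ) (n : ℤ) (x : T.V) : ℂ :=
  if n = 0 then f x
  else (myA T f n x - q * myA T f (n-2) x) / 2 + qpow q ((1:ℝ)/2) * myA T g (n-1) x

lemma Wz_rec (T : HomTree q) (f g : T.V → ℂ) {m : ℤ} (hm : 0 ≤ m) (x : T.V) :
    (∑ z ∈ T.sphere x 1, Wz T f g (m+1) z) - q * Wz T f g m x = Wz T f g (m+2) x := by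
  have hz1 : ∀ z : T.V, Wz T f g (m+1) z
      = (myA T f (m+1) z - q * myA T f (m-1) z) / 2 + qpow q ((1:ℝ)/2) * myA T g m z := by
    intro z
    rw [Wz, if_neg (by omega), show (m+1-2:ℤ) = m-1 from by ring,
      show (m+1-1:ℤ) = m from by ring]
  have hsum : ∑ z ∈ T.sphere x 1, Wz T f g (m+1) z
      = ((myA T f (m+2) x + q * myA T f m x)
          - q * ∑ z ∈ T.sphere x 1, myA T f (m-1) z) / 2
        + qpow q ((1:ℝ)/2) * (myA T g (m+1) x + q * myA T g (m-1) x) := by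
    rw [Finset.sum_congr rfl (fun z _ => hz1 z), Finset.sum_add_distrib, ← Finset.sum_div,
      Finset.sum_sub_distrib, ← Finset.mul_sum, ← Finset.mul_sum, myA_rec T g hm x]
    have hr := myA_rec T f (by omega : (0:ℤ) ≤ m+1) x
    rw [show (m+1+1:ℤ) = m+2 from by ring, show (m+1-1:ℤ) = m from by ring] at hr
    rw [hr]
  by_cases hm0 : m = 0
  · subst hm0
    have hzz : ∑ z ∈ T.sphere x 1, myA T f ((0:ℤ)-1) z = 0 :=
      Finset.sum_eq_zero fun z _ => myA_neg T f (by norm_num) z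
    rw [hsum, hzz, Wz, if_pos rfl, Wz, if_neg (by norm_num : (0:ℤ)+2 ≠ 0),
      show ((0:ℤ)+2-2) = 0 from by ring, show ((0:ℤ)+2-1) = 1 from by ring]
    rw [myA_neg T g (by norm_num : (0:ℤ)-1 < 0) x, myA_zero T f x]
    rw [show ((0:ℤ)+2) = 2 from by ring]
    ring
  · have hr2 := myA_rec T f (by omega : (0:ℤ) ≤ m-1) x
    rw [show (m-1+1:ℤ) = m from by ring, show (m-1-1:ℤ) = m-2 from by ring] at hr2
    rw [hsum, hr2, Wz, if_neg hm0, Wz, if_neg (by omega : m+2 ≠ 0),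
      show (m+2-2:ℤ) = m from by ring, show (m+2-1:ℤ) = m+1 from by ring]
    ring

lemma formula (hq : 0 < q) (T : HomTree q) (f g : T.V → ℂ) (u : T.V → ℤ → ℂ)
    (hu : IsCauchy T f g u) {n : ℤ} (hn : 0 ≤ n) (x : T.V) :
    (qpow q ((1:ℝ)/2))^n * u x n = Wz T f g n x := by
  obtain ⟨hw, h0, h1⟩ := hu
  set a := qpow q ((1:ℝ)/2) with ha
  have ha0 : a ≠ 0 := qpow_ne_zero hq _
  have haa : a * a = (q:ℂ) := by
    rw [ha, qpow_add hq, show (1:ℝ)/2 + 1/2 = 1 from by norm_num, qpow, Real.rpow_one]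
    norm_cast
  have hc : qpow q (-(1:ℝ)/2) * a = 1 := by
    rw [ha, qpow_add hq, show -(1:ℝ)/2 + 1/2 = 0 from by norm_num]
    exact qpow_zero
  suffices hkey : ∀ m : ℤ, 0 ≤ m → (∀ x, a^m * u x m = Wz T f g m x)
      ∧ (∀ x, a^(m+1) * u x (m+1) = Wz T f g (m+1) x) by
    exact (hkey n hn).1 x
  refine fun m hm => Int.le_induction
    (motive := fun m _ => (∀ x, a^m * u x m = Wz T f g m x)
      ∧ (∀ x, a^(m+1) * u x (m+1) = Wz T f g (m+1) x)) ?_ ?_ m hm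
  · constructor
    · intro x
      rw [zpow_zero, one_mul, h0, Wz, if_pos rfl]
    · intro x
      have hw0 := hw x 0
      rw [zero_add, zero_sub] at hw0
      have hsum0 : ∑ z ∈ T.sphere x 1, u z 0 = ∑ z ∈ T.sphere x 1, f z :=
        Finset.sum_congr rfl fun z _ => h0 z
      rw [hsum0] at hw0
      have hg := h1 x
      have hu1 : u x 1 = qpow q (-(1:ℝ)/2) * (∑ z ∈ T.sphere x 1, f z) / 2 + g x := by
        linear_combination hw0 / 2 + hg
      rw [zero_add, zpow_one, hu1, Wz, if_neg one_ne_zero,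
        show ((1:ℤ)-2) = -1 from by ring, show ((1:ℤ)-1) = 0 from by ring,
        myA_neg T f (n := -1) (by norm_num) x, myA_zero, myA_one]
      linear_combination ((∑ z ∈ T.sphere x 1, f z) / 2) * hc
  · intro m hm IH
    refine ⟨IH.2, fun x => ?_⟩
    have hwk := hw x (m+1)
    rw [show (m+1+1:ℤ) = m+2 from by ring, show (m+1-1:ℤ) = m from by ring] at hwk
    rw [show (m+1+1:ℤ) = m+2 from by ring]
    have hS : a^(m+1) * (∑ z ∈ T.sphere x 1, u z (m+1))
        = ∑ z ∈ T.sphere x 1, Wz T f g (m+1) z := by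
      rw [Finset.mul_sum]
      exact Finset.sum_congr rfl fun z _ => IH.2 z
    have hm' := IH.1 x
    have hWrec := Wz_rec T f g (by omega : (0:ℤ) ≤ m) x
    have hz1 : a^(m+2) = a^m * a * a := by
      rw [show (m+2:ℤ) = m + 1 + 1 from by ring, zpow_add₀ ha0, zpow_add₀ ha0, zpow_one]
    have hz2 : a^(m+1) = a^m * a := by rw [zpow_add₀ ha0, zpow_one]
    have hX : u x (m+2) = qpow q (-(1:ℝ)/2) * (∑ z ∈ T.sphere x 1, u z (m+1)) - u x m := by
      linear_combination hwk
    rw [hz1, hX]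
    rw [hz2] at hS
    linear_combination (a^m * a * (∑ z ∈ T.sphere x 1, u z (m+1))) * hc + hS + hWrec
      + (-(a^m * u x m)) * haa + (-(q:ℂ)) * hm'

lemma bound_nonneg (hq : 2 ≤ q) (T : HomTree q) (f g : T.V → ℂ) (x₀ : T.V) (N : ℕ)
    (hf : ∀ y, N < T.G.dist y x₀ → f y = 0) (hg : ∀ y, N < T.G.dist y x₀ → g y = 0)
    (u : T.V → ℤ → ℂ) (hu : IsCauchy T f g u) {n : ℤ} (hn : 0 ≤ n) (x : T.V) :
    ‖u x n‖ ≤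
      ((1+q:ℝ)/2 * ∑ y ∈ T.ball x₀ N, ‖f y‖
        + q * ∑ y ∈ T.ball x₀ N, ‖g y‖) * (q:ℝ) ^ (-(n:ℝ)/2) := by
  have hq0 : 0 < q := by omega
  have hq0' : (0:ℝ) < q := by exact_mod_cast hq0
  set F := ∑ y ∈ T.ball x₀ N, ‖f y‖ with hF
  set G := ∑ y ∈ T.ball x₀ N, ‖g y‖ with hG
  have hF0 : 0 ≤ F := Finset.sum_nonneg fun y _ => norm_nonneg _
  have hG0 : 0 ≤ G := Finset.sum_nonneg fun y _ => norm_nonneg _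
  have hq1 : (1:ℝ) ≤ q := by exact_mod_cast (by omega : 1 ≤ q)
  have hform := formula hq0 T f g u hu hn x
  have habs : ‖(qpow q ((1:ℝ)/2))^n‖ = (q:ℝ)^((n:ℝ)/2) := by
    rw [← qpow_int_half, abs_qpow]
  have hW : ‖Wz T f g n x‖ ≤ (1+q:ℝ)/2 * F + q * G := by
    by_cases hn0 : n = 0
    · subst hn0
      rw [Wz, if_pos rfl]
      have h1 := abs_le_ballsum T hf x
      nlinarith [h1, hF0, hG0, hq1]
    · rw [Wz, if_neg hn0]
      have b1 := myA_bound T hf n x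
      have b2 := myA_bound T hf (n-2) x
      have b3 := myA_bound T hg (n-1) x
      have hsqrt : (q:ℝ)^((1:ℝ)/2) ≤ q := by
        calc (q:ℝ)^((1:ℝ)/2) ≤ (q:ℝ)^(1:ℝ) :=
              Real.rpow_le_rpow_of_exponent_le hq1 (by norm_num)
        _ = q := Real.rpow_one _
      have t0 : ‖myA T f n x - ↑q * myA T f (n-2) x‖
          ≤ F + q * F := by
        calc ‖myA T f n x - ↑q * myA T f (n-2) x‖
            ≤ ‖myA T f n x‖ + ‖↑q * myA T f (n-2) x‖ := by
              simpa using norm_sub_le (myA T f n x) (↑q * myA T f (n-2) x)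
        _ ≤ F + q * F := by
              rw [norm_mul, Complex.norm_natCast]
              have := mul_le_mul_of_nonneg_left b2 (by positivity : (0:ℝ) ≤ q)
              linarith
      have t1 : ‖qpow q ((1:ℝ)/2) * myA T g (n-1) x‖
          ≤ (q:ℝ)^((1:ℝ)/2) * G := by
        rw [norm_mul, abs_qpow]
        exact mul_le_mul_of_nonneg_left b3 (Real.rpow_nonneg (by positivity) _)
      calc ‖(myA T f n x - ↑q * myA T f (n-2) x) / 2
            + qpow q ((1:ℝ)/2) * myA T g (n-1) x‖
          ≤ ‖(myA T f n x - ↑q * myA T f (n-2) x) / 2‖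
            + ‖qpow q ((1:ℝ)/2) * myA T g (n-1) x‖ :=
            norm_add_le _ _
      _ = ‖myA T f n x - ↑q * myA T f (n-2) x‖ / 2
            + ‖qpow q ((1:ℝ)/2) * myA T g (n-1) x‖ := by
            rw [norm_div, Complex.norm_two]
      _ ≤ (1+q:ℝ)/2 * F + q * G := by
            have hr : (q:ℝ)^((1:ℝ)/2) * G ≤ q * G := mul_le_mul_of_nonneg_right hsqrt hG0
            nlinarith [t0, t1]
  have hpos : (0:ℝ) < (q:ℝ)^((n:ℝ)/2) := Real.rpow_pos_of_pos hq0' _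
  have hmul : (q:ℝ)^((n:ℝ)/2) * ‖u x n‖ = ‖Wz T f g n x‖ := by
    rw [← habs, ← norm_mul, hform]
  have hinv : (q:ℝ)^(-(n:ℝ)/2) = ((q:ℝ)^((n:ℝ)/2))⁻¹ := by
    rw [← Real.rpow_neg (le_of_lt hq0'), neg_div]
  have h2 : ‖u x n‖ = ‖Wz T f g n x‖ / (q:ℝ)^((n:ℝ)/2) := by
    field_simp
    linarith [hmul]
  rw [hinv, h2, div_eq_mul_inv]
  exact mul_le_mul_of_nonneg_right hW (inv_nonneg.mpr hpos.le)


end WaveAux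


open HomTree in
/-- decay of solutions with compactly supported data. -/
theorem stmt11 {q : ℕ} (hq : 2 ≤ q) (T : HomTree q) (f g : T.V → ℂ)
    (x₀ : T.V) (N : ℕ)
    (hf : ∀ y : T.V, N < T.G.dist y x₀ → f y = 0)
    (hg : ∀ y : T.V, N < T.G.dist y x₀ → g y = 0)
    (u : T.V → ℤ → ℂ) (hu : HomTree.IsCauchy T f g u) :
    ∃ C : ℝ, 0 ≤ C ∧ ∀ (x : T.V) (n : ℤ),
      ‖u x n‖ ≤ C * (q : ℝ) ^ (-(n.natAbs : ℝ) / 2) := by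
  classical
  have hF0 : (0:ℝ) ≤ ∑ y ∈ T.ball x₀ N, ‖f y‖ :=
    Finset.sum_nonneg fun y _ => norm_nonneg _
  have hG0 : (0:ℝ) ≤ ∑ y ∈ T.ball x₀ N, ‖g y‖ :=
    Finset.sum_nonneg fun y _ => norm_nonneg _
  refine ⟨(1+q:ℝ)/2 * ∑ y ∈ T.ball x₀ N, ‖f y‖
      + q * ∑ y ∈ T.ball x₀ N, ‖g y‖, ?_, ?_⟩
  · have h1 : (0:ℝ) ≤ (1+q:ℝ)/2 := by positivity
    have h2 : (0:ℝ) ≤ (q:ℝ) := by positivity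
    nlinarith
  · intro x n
    by_cases hn : 0 ≤ n
    · have hb := WaveAux.bound_nonneg hq T f g x₀ N hf hg u hu hn x
      have hcast : ((n.natAbs : ℝ)) = (n:ℝ) := by
        push_cast [Nat.cast_natAbs]
        exact abs_of_nonneg (by exact_mod_cast hn)
      rw [hcast]
      exact hb
    · push_neg at hn
      set u' : T.V → ℤ → ℂ := fun z k => u z (-k) with hu'
      obtain ⟨hw, h0, h1⟩ := hu
      have hcau : HomTree.IsCauchy T f (fun y => -g y) u' := by
        refine ⟨fun z k => ?_, fun z => ?_, fun z => ?_⟩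
        · have hwz := hw z (-k)
          simp only [hu']
          rw [show (-(k+1) : ℤ) = -k-1 from by ring, show (-(k-1) : ℤ) = -k+1 from by ring]
          linear_combination hwz
        · simp only [hu', neg_zero]
          exact h0 z
        · simp only [hu']
          rw [show (-(-1) : ℤ) = 1 from by ring, show (-(1:ℤ)) = -1 from rfl]
          linear_combination - h1 z
      have hgs : ∀ y, N < T.G.dist y x₀ → (fun y => -g y) y = 0 := fun y hy => by
        simp [hg y hy]
      have hb := WaveAux.bound_nonneg hq T f (fun y => -g y) x₀ N hf hgs u' hcau
        (n := -n) (by omega) x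
      have hrw : u' x (-n) = u x n := by simp [hu']
      rw [hrw] at hb
      have hsg : ∑ y ∈ T.ball x₀ N, ‖-g y‖ = ∑ y ∈ T.ball x₀ N, ‖g y‖ := by
        simp
      rw [hsg] at hb
      have hcast : ((n.natAbs : ℝ)) = ((-n : ℤ) : ℝ) := by
        push_cast [Nat.cast_natAbs]
        exact abs_of_nonpos (by exact_mod_cast hn.le)
      rw [hcast]
      exact hb
end

section
/- (Finite propagation speed.) Let u solve the Cauchy problem for the shifted wave equation on T_q with data f, g : T_q → ℂ supported in the ball B(x_0,N) = {y : d(y,x_0) ≤ N}. Then u(x,n) = 0 whenever d(x,x_0) > |n| + N; that is, supp u ⊂ {(x,n) ∈ T_q × ℤ : d(x,x_0) ≤ |n| + N}. -/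
open scoped BigOperators

open HomTree in
/-- finite propagation speed. -/
theorem stmt12 {q : ℕ} (hq : 2 ≤ q) (T : HomTree q) (f g : T.V → ℂ)
    (x₀ : T.V) (N : ℕ)
    (hf : ∀ y : T.V, N < T.G.dist y x₀ → f y = 0)
    (hg : ∀ y : T.V, N < T.G.dist y x₀ → g y = 0)
    (u : T.V → ℤ → ℂ) (hu : HomTree.IsCauchy T f g u) :
    ∀ (x : T.V) (n : ℤ), n.natAbs + N < T.G.dist x x₀ → u x n = 0 := by
  -- membership in sphere of radius 1
  have hmem : ∀ x y : T.V, y ∈ T.sphere x 1 ↔ T.G.dist x y = 1 := by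
    intro x y
    simp [HomTree.sphere, Set.Finite.mem_toFinset]
  have htri : ∀ x y : T.V, T.G.dist x y = 1 → T.G.dist x x₀ ≤ 1 + T.G.dist y x₀ := by
    intro x y h
    calc T.G.dist x x₀ ≤ T.G.dist x y + T.G.dist y x₀ := T.conn.dist_triangle
      _ = 1 + T.G.dist y x₀ := by rw [h]
  obtain ⟨hwave, hf0, hg0⟩ := hu
  -- main induction
  have main : ∀ k : ℕ, ∀ x : T.V, k + N < T.G.dist x x₀ →
      u x (k : ℤ) = 0 ∧ u x (-(k : ℤ)) = 0 := by
    intro k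
    induction k using Nat.strong_induction_on with
    | _ k ih =>
      match k with
      | 0 =>
        intro x hx
        have : u x 0 = 0 := by rw [hf0 x]; exact hf x (by simpa using hx)
        simpa using this
      | 1 =>
        intro x hx
        have hsum : ∑ y ∈ T.sphere x 1, u y 0 = 0 := by
          apply Finset.sum_eq_zero
          intro y hy
          have hd : T.G.dist x y = 1 := (hmem x y).1 hy
          have : N < T.G.dist y x₀ := by
            have := htri x y hd
            omega
          rw [hf0 y]; exact hf y this
        have h1 : u x (0 + 1) + u x (0 - 1) = qpow q (-(1:ℝ)/2) * ∑ y ∈ T.sphere x 1, u y 0 :=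
          hwave x 0
        rw [hsum, mul_zero] at h1
        norm_num at h1
        have h2 : (u x 1 - u x (-1)) / 2 = g x := hg0 x
        have hgx : g x = 0 := hg x (by omega)
        rw [hgx] at h2
        have hdiff : u x 1 - u x (-1) = 0 := by linear_combination 2 * h2
        constructor
        · push_cast
          linear_combination (h1 + hdiff) / 2
        · push_cast
          linear_combination (h1 - hdiff) / 2
      | (m + 2) =>
        intro x hx
        have hsum : ∀ s : ℤ, (∀ y, (m:ℤ) + 1 + N < T.G.dist y x₀ → u y s = 0) →
            ∑ y ∈ T.sphere x 1, u y s = 0 := by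
          intro s hs
          apply Finset.sum_eq_zero
          intro y hy
          have hd : T.G.dist x y = 1 := (hmem x y).1 hy
          have := htri x y hd
          apply hs
          omega
        have ih1 := ih (m + 1) (by omega)
        have ih0 := ih m (by omega)
        constructor
        · have h1 := hwave x ((m : ℤ) + 1)
          have hs : ∑ y ∈ T.sphere x 1, u y ((m:ℤ) + 1) = 0 := by
            apply hsum
            intro y hy
            have := (ih1 y (by push_cast; omega)).1
            push_cast at this ⊢
            convert this using 2
          have h0 : u x ((m : ℤ)) = 0 := (ih0 x (by omega)).1
          rw [hs, mul_zero] at h1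
          have : u x ((m:ℤ) + 1 + 1) + u x ((m:ℤ) + 1 - 1) = 0 := h1
          have hm : ((m:ℤ) + 1 - 1) = (m : ℤ) := by ring
          rw [hm, h0, add_zero] at this
          push_cast
          convert this using 2
          ring
        · have h1 := hwave x (-((m : ℤ) + 1))
          have hs : ∑ y ∈ T.sphere x 1, u y (-((m:ℤ) + 1)) = 0 := by
            apply hsum
            intro y hy
            have := (ih1 y (by push_cast; omega)).2
            push_cast at this ⊢
            convert this using 2
          have h0 : u x (-(m : ℤ)) = 0 := (ih0 x (by omega)).2
          rw [hs, mul_zero] at h1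
          have hm1 : (-((m:ℤ) + 1) + 1) = -(m : ℤ) := by ring
          have hm2 : (-((m:ℤ) + 1) - 1) = -((m : ℤ) + 2) := by ring
          rw [hm1, hm2, h0, zero_add] at h1
          push_cast
          convert h1 using 2
  intro x n hn
  rcases Int.natAbs_eq n with h | h
  · rw [h]; exact (main n.natAbs x hn).1
  · rw [h]; exact (main n.natAbs x hn).2
end
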